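/- arXiv:1910.00359 — 8 statements merged into one kernel-verified Lean document; each statement's English description precedes it below -/
import Mathlib

section
/- Let L ≥ 1 and fix layer widths n_0 = m, n_1, …, n_L = n, and let s = min_{0 ≤ i ≤ L} n_i be the minimum layer width. Then the family of L-layer multilayer perceptrons with ReLU activations and these layer widths has rank-s affine expression: for every affine function G : ℝ^m → ℝ^n of the form G(x) = A x + b with rank(A) = s, and every finite subset Ω ⊂ ℝ^m, there exists a parameter vector φ such that F_φ(x) = G(x) for all x ∈ Ω. -/
open Matrix

/-- Post-activation values of a ReLU MLP with layer widths `n 0, n 1, …`: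
`act n A b x k` is the vector fed as input to layer `k+1`
(`act 0 = x`, and `act (k+1) = ReLU(A_k ⬝ act k + b_k)` componentwise). -/
noncomputable def act (n : ℕ → ℕ)
    (A : ∀ i : ℕ, Matrix (Fin (n (i + 1))) (Fin (n i)) ℝ)
    (b : ∀ i : ℕ, Fin (n (i + 1)) → ℝ)
    (x : Fin (n 0) → ℝ) : (k : ℕ) → Fin (n k) → ℝ
  | 0 => x
  | k + 1 => fun j => max ((A k).mulVec (act n A b x k) j + b k j) 0

/-- The `k`-th preactivation vector `H_{k+1}(act k) = A_k ⬝ act k + b_k`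
(the input of the `(k+1)`-st ReLU when `k + 1` is not the last layer). -/
noncomputable def preact (n : ℕ → ℕ)
    (A : ∀ i : ℕ, Matrix (Fin (n (i + 1))) (Fin (n i)) ℝ)
    (b : ∀ i : ℕ, Fin (n (i + 1)) → ℝ)
    (x : Fin (n 0) → ℝ) (k : ℕ) : Fin (n (k + 1)) → ℝ :=
  fun j => (A k).mulVec (act n A b x k) j + b k j

/-- Output of the `(K+1)`-layer ReLU MLP
`F_φ(x) = H_{K+1}(f(H_K(⋯f(H_1(x))⋯)))` (no ReLU after the last affine layer). -/
noncomputable def mlp (n : ℕ → ℕ)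
    (A : ∀ i : ℕ, Matrix (Fin (n (i + 1))) (Fin (n i)) ℝ)
    (b : ∀ i : ℕ, Fin (n (i + 1)) → ℝ)
    (K : ℕ) (x : Fin (n 0) → ℝ) : Fin (n (K + 1)) → ℝ :=
  preact n A b x K

lemma exists_factorization {m N s : ℕ} (A : Matrix (Fin N) (Fin m) ℝ)
    (h : A.rank = s) :
    ∃ (B : Matrix (Fin N) (Fin s) ℝ) (C : Matrix (Fin s) (Fin m) ℝ), A = B * C := by
  classical
  have hV : Module.finrank ℝ (LinearMap.range A.mulVecLin) = s := h
  let e : Module.Basis (Fin s) ℝ (LinearMap.range A.mulVecLin) :=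
    (Module.finBasis ℝ _).reindex (finCongr hV)
  let y : Fin m → LinearMap.range A.mulVecLin := fun v =>
    ⟨A.mulVec (Pi.single v 1),
      LinearMap.mem_range.2 ⟨Pi.single v 1, by simp [Matrix.mulVecLin_apply]⟩⟩
  refine ⟨fun j u => (e u : Fin N → ℝ) j, fun u v => e.repr (y v) u, ?_⟩
  ext j v
  erw [Matrix.mul_apply]
  have hcoe : ((y v : Fin N → ℝ)) = ∑ u : Fin s, e.repr (y v) u • (e u : Fin N → ℝ) := by
    conv_lhs => rw [← e.sum_repr (y v)]
    push_cast [Submodule.coe_sum]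
    simp
  have h3 : ∑ u : Fin s, (e u : Fin N → ℝ) j * e.repr (y v) u
      = (∑ u : Fin s, e.repr (y v) u • (e u : Fin N → ℝ)) j := by
    rw [Finset.sum_apply]
    exact Finset.sum_congr rfl fun u _ => by simp [mul_comm]
  rw [h3, ← hcoe]
  show A j v = (A.mulVec (Pi.single v 1)) j
  simp [Matrix.mulVec, dotProduct, Pi.single_apply, mul_ite]

lemma sum_dite_lt {N s : ℕ} (hsN : s ≤ N) (g : Fin s → ℝ) :
    (∑ v : Fin N, if h : (v : ℕ) < s then g ⟨v, h⟩ else 0) = ∑ u : Fin s, g u := by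
  have h1 : (∑ u : Fin s, g u) = ∑ u : Fin s, if h : ((u : ℕ)) < s then g ⟨u, h⟩ else 0 := by
    refine Finset.sum_congr rfl fun u _ => ?_
    rw [dif_pos u.isLt]
  rw [h1, Fin.sum_univ_eq_sum_range (fun i => if h : i < s then g ⟨i, h⟩ else 0) N,
      Fin.sum_univ_eq_sum_range (fun i => if h : i < s then g ⟨i, h⟩ else 0) s]
  exact (Finset.sum_subset (Finset.range_subset_range.2 hsN)
    (fun i _ hi => dif_neg (by simpa using hi))).symm

/-- weights of the constructed network -/
noncomputable def Wmat (n : ℕ → ℕ) (K' s : ℕ)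
    (B : Matrix (Fin (n (K' + 2))) (Fin s) ℝ)
    (C : Matrix (Fin s) (Fin (n 0)) ℝ) :
    ∀ i : ℕ, Matrix (Fin (n (i + 1))) (Fin (n i)) ℝ
  | 0 => fun j v => if hj : (j : ℕ) < s then C ⟨j, hj⟩ v else 0
  | (k + 1) => fun j v =>
      if hK : k + 1 = K' + 1 then
        (if hv : (v : ℕ) < s then B (Fin.cast (congrArg n (by omega)) j) ⟨v, hv⟩ else 0)
      else if k + 1 < K' + 1 then
        (if (j : ℕ) < s ∧ (j : ℕ) = (v : ℕ) then 1 else 0)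
      else 0

/-- biases of the constructed network -/
noncomputable def cvec (n : ℕ → ℕ) (K' s : ℕ)
    (B : Matrix (Fin (n (K' + 2))) (Fin s) ℝ)
    (bb : Fin (n (K' + 2)) → ℝ) (t : ℝ) :
    ∀ i : ℕ, Fin (n (i + 1)) → ℝ
  | 0 => fun j => if (j : ℕ) < s then t else 0
  | (k + 1) => fun j =>
      if hK : k + 1 = K' + 1 then
        bb (Fin.cast (congrArg n (by omega)) j)
          - t * ∑ u : Fin s, B (Fin.cast (congrArg n (by omega)) j) u
      else 0

/-- The family of `(K+1)`-layer ReLU MLPs with layer widths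
`n 0, …, n (K+1)` has rank-`s` affine expression, where `s = min_{0 ≤ i ≤ K+1} n i`:
every affine function `G(x) = A x + b` with `rank A = s` can be matched exactly
on any finite set `Ω` of inputs by some choice of MLP parameters. -/
theorem rank_s_affine_expression (n : ℕ → ℕ) (K : ℕ)
    (A : Matrix (Fin (n (K + 1))) (Fin (n 0)) ℝ) (bb : Fin (n (K + 1)) → ℝ)
    (hrank : A.rank = (Finset.range (K + 2)).inf' (by simp) n)
    (Ω : Finset (Fin (n 0) → ℝ)) :
    ∃ (W : ∀ i : ℕ, Matrix (Fin (n (i + 1))) (Fin (n i)) ℝ)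
      (c : ∀ i : ℕ, Fin (n (i + 1)) → ℝ),
      ∀ x ∈ Ω, mlp n W c K x = A.mulVec x + bb := by
  classical
  cases K with
  | zero =>
      refine ⟨fun i => Nat.casesOn i A fun _ => 0,
        fun i => Nat.casesOn i bb fun _ => 0, fun x hx => ?_⟩
      rfl
  | succ K' =>
      set s : ℕ := (Finset.range (K' + 1 + 2)).inf' (by simp) n with hs
      have hsle : ∀ i, i ≤ K' + 2 → s ≤ n i := fun i hi =>
        Finset.inf'_le n (Finset.mem_range.2 (by omega))
      obtain ⟨B, C, hBC⟩ := exists_factorization A hrank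
      -- choose the bias shift t
      obtain ⟨T, hT⟩ := Finset.exists_le
        ((Ω ×ˢ (Finset.univ : Finset (Fin s))).image fun p => |C.mulVec p.1 p.2|)
      set t : ℝ := T + 1 with ht
      have hpos : ∀ x ∈ Ω, ∀ u : Fin s, 0 ≤ C.mulVec x u + t := by
        intro x hx u
        have := hT _ (Finset.mem_image.2 ⟨(x, u), Finset.mem_product.2 ⟨hx, Finset.mem_univ u⟩, rfl⟩)
        have := neg_abs_le (C.mulVec x u)
        simp only [ht]; linarith
      refine ⟨Wmat n K' s B C, cvec n K' s B bb t, fun x hx => ?_⟩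
      -- the invariant
      have key : ∀ k, k ≤ K' → ∀ j : Fin (n (k + 1)),
          act n (Wmat n K' s B C) (cvec n K' s B bb t) x (k + 1) j
            = if h : (j : ℕ) < s then C.mulVec x ⟨j, h⟩ + t else 0 := by
        intro k
        induction k with
        | zero =>
            intro _ j
            show max ((Wmat n K' s B C 0).mulVec x j + cvec n K' s B bb t 0 j) 0 = _
            by_cases hj : (j : ℕ) < s
            · rw [dif_pos hj]
              have hmv : (Wmat n K' s B C 0).mulVec x j = C.mulVec x ⟨j, hj⟩ := by
                simp only [Wmat, Matrix.mulVec, dotProduct, dif_pos hj]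
              rw [hmv]
              show max (C.mulVec x ⟨j, hj⟩ + (if (j : ℕ) < s then t else 0)) 0 = _
              rw [if_pos hj]
              exact max_eq_left (hpos x hx ⟨j, hj⟩)
            · rw [dif_neg hj]
              have hmv : (Wmat n K' s B C 0).mulVec x j = 0 := by
                simp only [Wmat, Matrix.mulVec, dotProduct, dif_neg hj]
                simp
              rw [hmv]
              show max (0 + (if (j : ℕ) < s then t else 0)) 0 = 0
              rw [if_neg hj]
              simp
        | succ k ih =>
            intro hk j
            have hk' : k ≤ K' := by omega
            have hne : ¬ (k + 1 = K' + 1) := by omega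
            have hlt : k + 1 < K' + 1 := by omega
            show max ((Wmat n K' s B C (k+1)).mulVec
                (act n (Wmat n K' s B C) (cvec n K' s B bb t) x (k+1)) j
                + cvec n K' s B bb t (k+1) j) 0 = _
            have hc : cvec n K' s B bb t (k + 1) j = 0 := by
              simp only [cvec, dif_neg hne]
            rw [hc, add_zero]
            by_cases hj : (j : ℕ) < s
            · rw [dif_pos hj]
              set v₀ : Fin (n (k + 1)) := ⟨(j : ℕ), lt_of_lt_of_le hj (hsle (k+1) (by omega))⟩ with hv₀
              have hmv : (Wmat n K' s B C (k+1)).mulVec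
                  (act n (Wmat n K' s B C) (cvec n K' s B bb t) x (k+1)) j
                  = C.mulVec x ⟨j, hj⟩ + t := by
                rw [Matrix.mulVec]
                have hW : ∀ v : Fin (n (k + 1)), Wmat n K' s B C (k+1) j v
                    = if v = v₀ then 1 else 0 := by
                  intro v
                  simp only [Wmat, dif_neg hne, if_pos hlt]
                  by_cases hv : v = v₀
                  · rw [if_pos hv, if_pos ⟨hj, by rw [hv]⟩]
                  · rw [if_neg hv, if_neg]
                    rintro ⟨-, h2⟩
                    exact hv (Fin.ext h2.symm)
                rw [dotProduct]
                simp only [hW, ite_mul, one_mul, zero_mul]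
                rw [Finset.sum_ite_eq' Finset.univ v₀]
                rw [if_pos (Finset.mem_univ v₀)]
                rw [ih hk' v₀]
                rw [dif_pos (show ((v₀ : ℕ)) < s from hj)]
              rw [hmv]
              exact max_eq_left (hpos x hx ⟨j, hj⟩)
            · rw [dif_neg hj]
              have hmv : (Wmat n K' s B C (k+1)).mulVec
                  (act n (Wmat n K' s B C) (cvec n K' s B bb t) x (k+1)) j = 0 := by
                rw [Matrix.mulVec, dotProduct]
                apply Finset.sum_eq_zero
                intro v _
                have : Wmat n K' s B C (k+1) j v = 0 := by
                  simp only [Wmat, dif_neg hne, if_pos hlt]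
                  rw [if_neg]
                  rintro ⟨h1, -⟩
                  exact hj h1
                rw [this, zero_mul]
              rw [hmv]
              simp
      -- the final layer
      funext j
      show (Wmat n K' s B C (K'+1)).mulVec
          (act n (Wmat n K' s B C) (cvec n K' s B bb t) x (K'+1)) j
          + cvec n K' s B bb t (K'+1) j = _
      have hcast : ∀ (h : n (K' + 1 + 1) = n (K' + 2)) (w : Fin (n (K' + 1 + 1))),
          Fin.cast h w = w := fun h w => rfl
      have hW : ∀ v : Fin (n (K' + 1)), Wmat n K' s B C (K'+1) j v
          = if hv : (v : ℕ) < s then B j ⟨v, hv⟩ else 0 := by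
        intro v
        simp only [Wmat, hcast]; rw [dif_pos trivial]
      have hc : cvec n K' s B bb t (K'+1) j = bb j - t * ∑ u : Fin s, B j u := by
        simp only [cvec, hcast]; rw [dif_pos trivial]
      have hmv : (Wmat n K' s B C (K'+1)).mulVec
          (act n (Wmat n K' s B C) (cvec n K' s B bb t) x (K'+1)) j
          = ∑ u : Fin s, B j u * (C.mulVec x u + t) := by
        rw [Matrix.mulVec, dotProduct]
        rw [← sum_dite_lt (hsle (K' + 1) (by omega)) (fun u => B j u * (C.mulVec x u + t))]
        refine Finset.sum_congr rfl fun v _ => ?_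
        rw [hW v, key K' le_rfl v]
        by_cases hv : (v : ℕ) < s
        · rw [dif_pos hv, dif_pos hv, dif_pos hv]
        · rw [dif_neg hv, dif_neg hv, dif_neg hv, zero_mul]
      rw [hmv, hc]
      have hexp : ∑ u : Fin s, B j u * (C.mulVec x u + t)
          = (∑ u : Fin s, B j u * C.mulVec x u) + t * ∑ u : Fin s, B j u := by
        rw [Finset.mul_sum, ← Finset.sum_add_distrib]
        exact Finset.sum_congr rfl fun u _ => by ring
      rw [hexp]
      have hA : (∑ u : Fin s, B j u * C.mulVec x u) = A.mulVec x j := by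
        rw [hBC, ← Matrix.mulVec_mulVec]
        rfl
      rw [hA]
      show A.mulVec x j + t * _ + (bb j - t * _) = A.mulVec x j + bb j
      ring
end

section
/- Let L ≥ 1 and fix layer widths n_0 = m, n_1, …, n_L = n, and let s = min_{0 ≤ i ≤ L} n_i. For every affine function G(x) = A x + b with rank(A) = s and every finite subset Ω ⊂ ℝ^m, there exist a parameter vector φ and a constant c > 0 such that F_φ(x) = G(x) for all x ∈ Ω, and additionally every component of every preactivation of F_φ at every x ∈ Ω is greater than or equal to c (in particular, no ReLU ever maps an entry to zero on Ω). -/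
open Matrix

/-- Coordinate-embedding matrix: identity on first `s` coordinates. -/
noncomputable def Emb (a s : ℕ) : Matrix (Fin a) (Fin s) ℝ :=
  Matrix.of fun i j => if (i : ℕ) = (j : ℕ) then 1 else 0

lemma Emb_mulVec {a s : ℕ} (v : Fin s → ℝ) (i : Fin a) :
    (Emb a s *ᵥ v) i = if h' : (i : ℕ) < s then v ⟨i, h'⟩ else 0 := by
  simp only [Matrix.mulVec, dotProduct, Emb, Matrix.of_apply]
  by_cases h' : (i : ℕ) < s
  · rw [dif_pos h', Finset.sum_eq_single (⟨(i : ℕ), h'⟩ : Fin s)]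
    · simp
    · intro b _ hb
      have : ¬((i : ℕ) = (b : ℕ)) := fun hc => hb (Fin.ext hc.symm)
      rw [if_neg this, zero_mul]
    · simp
  · rw [dif_neg h']
    apply Finset.sum_eq_zero
    intro b _
    have : ¬((i : ℕ) = (b : ℕ)) := fun hc => h' (hc ▸ b.2)
    rw [if_neg this, zero_mul]

lemma EmbT_mulVec {a s : ℕ} (h : s ≤ a) (w : Fin a → ℝ) (j : Fin s) :
    ((Emb a s)ᵀ *ᵥ w) j = w ⟨(j : ℕ), lt_of_lt_of_le j.2 h⟩ := by
  simp only [Matrix.mulVec, dotProduct, Matrix.transpose_apply, Emb, Matrix.of_apply]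
  rw [Finset.sum_eq_single (⟨(j : ℕ), lt_of_lt_of_le j.2 h⟩ : Fin a)]
  · simp
  · intro b _ hb
    rw [if_neg fun hc => hb (Fin.ext hc), zero_mul]
  · simp

lemma EmbT_Emb_mulVec {a s : ℕ} (h : s ≤ a) (v : Fin s → ℝ) :
    (Emb a s)ᵀ *ᵥ (Emb a s *ᵥ v) = v := by
  funext j
  rw [EmbT_mulVec h, Emb_mulVec, dif_pos j.2]

lemma Emb_mulVec_abs_le {a s : ℕ} (v : Fin s → ℝ) (i : Fin a) :
    |(Emb a s *ᵥ v) i| ≤ ‖v‖ := by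
  rw [Emb_mulVec]
  split_ifs with h'
  · exact norm_le_pi_norm v _
  · simpa using norm_nonneg v

/-- Rank factorization. -/
lemma exists_factorization_s1 {p q : ℕ} (A : Matrix (Fin p) (Fin q) ℝ) :
    ∃ (U : Matrix (Fin p) (Fin A.rank) ℝ) (V : Matrix (Fin A.rank) (Fin q) ℝ), U * V = A := by
  classical
  have hfin : Module.finrank ℝ (LinearMap.range A.mulVecLin) = A.rank := rfl
  let bas : Module.Basis (Fin A.rank) ℝ (LinearMap.range A.mulVecLin) :=
    Module.finBasisOfFinrankEq ℝ _ hfin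
  refine ⟨Matrix.of fun i j => (bas j : Fin p → ℝ) i,
    Matrix.of fun j k => bas.repr ⟨A.mulVec (Pi.single k 1),
      LinearMap.mem_range.mpr ⟨Pi.single k 1, rfl⟩⟩ j, ?_⟩
  ext i k
  have h2 : ((∑ j, bas.repr ⟨A.mulVec (Pi.single k 1),
        LinearMap.mem_range.mpr ⟨Pi.single k 1, rfl⟩⟩ j • bas j :
      LinearMap.range A.mulVecLin) : Fin p → ℝ) i = (A *ᵥ Pi.single k 1) i := by
    rw [bas.sum_repr]
  rw [Matrix.mul_apply]
  have h3 : (A *ᵥ Pi.single k 1) i = A i k := by simp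
  rw [← h3, ← h2, Submodule.coe_sum, Finset.sum_apply]
  simp only [SetLike.val_smul, Pi.smul_apply, smul_eq_mul, mul_comm, Matrix.of_apply]

section Params

variable (n : ℕ → ℕ) (K s : ℕ) (U : Matrix (Fin (n (K + 1))) (Fin s) ℝ)
  (V : Matrix (Fin s) (Fin (n 0)) ℝ) (bb : Fin (n (K + 1)) → ℝ) (t : ℝ)

/-- Weight matrices realizing `U * V` through the layers. -/
noncomputable def WW (i : ℕ) : Matrix (Fin (n (i + 1))) (Fin (n i)) ℝ :=
  (if h : i = K then U.submatrix (Fin.cast (congrArg (fun j => n (j + 1)) h)) id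
    else Emb (n (i + 1)) s) *
  (if h : i = 0 then V.submatrix id (Fin.cast (congrArg n h)) else (Emb (n i) s)ᵀ)

/-- Bias vectors. -/
noncomputable def cc (k : ℕ) : Fin (n (k + 1)) → ℝ :=
  (if h : k = K then bb ∘ Fin.cast (congrArg (fun j => n (j + 1)) h) else fun _ => t)
    - WW n K s U V k *ᵥ (if k = 0 then 0 else fun _ => t)

lemma submatrix_cast_col {a b : ℕ} (M : Matrix (Fin a) (Fin b) ℝ) (p : b = b) :
    M.submatrix id (Fin.cast p) = M := by
  ext i j
  exact congrArg (M i) (Fin.ext rfl)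

lemma submatrix_cast_row {a b : ℕ} (M : Matrix (Fin a) (Fin b) ℝ) (p : a = a) :
    M.submatrix (Fin.cast p) id = M := by
  ext i j
  exact congrArg (fun z => M z j) (Fin.ext rfl)

lemma WW_mid {i : ℕ} (h0 : i ≠ 0) (hK : i ≠ K) :
    WW n K s U V i = Emb (n (i + 1)) s * (Emb (n i) s)ᵀ := by
  rw [WW, dif_neg hK, dif_neg h0]

lemma WW_zero (hK : K ≠ 0) : WW n K s U V 0 = Emb (n 1) s * V := by
  rw [WW, dif_neg (fun h => hK h.symm), dif_pos rfl, submatrix_cast_col]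

lemma WW_last (hK : K ≠ 0) : WW n K s U V K = U * (Emb (n K) s)ᵀ := by
  rw [WW, dif_pos rfl, dif_neg hK, submatrix_cast_row]

lemma cc_zero (hK : K ≠ 0) : cc n K s U V bb t 0 = fun _ => t := by
  rw [cc, dif_neg (fun h => hK h.symm), if_pos rfl, Matrix.mulVec_zero, sub_zero]

lemma cc_mid {k : ℕ} (h0 : k ≠ 0) (hK : k ≠ K) :
    cc n K s U V bb t k = (fun _ => t) - WW n K s U V k *ᵥ (fun _ => t) := by
  rw [cc, dif_neg hK, if_neg h0]

lemma cc_last (hK : K ≠ 0) :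
    cc n K s U V bb t K = bb - WW n K s U V K *ᵥ (fun _ => t) := by
  rw [cc, dif_pos rfl, if_neg hK]
  exact congrArg (fun z => z - WW n K s U V K *ᵥ fun _ => t)
    (funext fun j => congrArg bb (Fin.ext rfl))

end Params

lemma WW_zero_zero (n : ℕ → ℕ) (s : ℕ) (U : Matrix (Fin (n (0 + 1))) (Fin s) ℝ)
    (V : Matrix (Fin s) (Fin (n 0)) ℝ) : WW n 0 s U V 0 = U * V := by
  rw [WW, dif_pos rfl, dif_pos rfl, submatrix_cast_row, submatrix_cast_col]

lemma cc_zero_zero (n : ℕ → ℕ) (s : ℕ) (U : Matrix (Fin (n (0 + 1))) (Fin s) ℝ)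
    (V : Matrix (Fin s) (Fin (n 0)) ℝ) (bb : Fin (n (0 + 1)) → ℝ) (t : ℝ) :
    cc n 0 s U V bb t 0 = bb := by
  rw [cc, dif_pos rfl, if_pos rfl, Matrix.mulVec_zero, sub_zero]
  funext j
  exact congrArg bb (Fin.ext rfl)

/-- Rank-`s` affine expression with uniformly positive preactivations:
the matching parameters can be chosen so that additionally every component of every
preactivation (the inputs to the `K` ReLUs) at every `x ∈ Ω` is at least some `c > 0`. -/
theorem rank_s_affine_expression_pos_preact (n : ℕ → ℕ) (K : ℕ)
    (A : Matrix (Fin (n (K + 1))) (Fin (n 0)) ℝ) (bb : Fin (n (K + 1)) → ℝ)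
    (hrank : A.rank = (Finset.range (K + 2)).inf' (by simp) n)
    (Ω : Finset (Fin (n 0) → ℝ)) :
    ∃ (W : ∀ i : ℕ, Matrix (Fin (n (i + 1))) (Fin (n i)) ℝ)
      (c : ∀ i : ℕ, Fin (n (i + 1)) → ℝ) (c₀ : ℝ),
      0 < c₀ ∧
      (∀ x ∈ Ω, mlp n W c K x = A.mulVec x + bb) ∧
      (∀ x ∈ Ω, ∀ k < K, ∀ j, c₀ ≤ preact n W c x k j) := by
  classical
  have hsle : ∀ i, i ≤ K + 1 → A.rank ≤ n i := by
    intro i hi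
    rw [hrank]
    exact Finset.inf'_le n (Finset.mem_range.mpr (by omega))
  obtain ⟨U, V, hUV⟩ := exists_factorization_s1 A
  set t : ℝ := ((Ω.sup fun x => ‖V *ᵥ x‖₊ : NNReal) : ℝ) + 1 with ht
  have hVbound : ∀ x ∈ Ω, ‖V *ᵥ x‖ ≤ t - 1 := by
    intro x hx
    have h1 : ‖V *ᵥ x‖₊ ≤ Ω.sup fun x => ‖V *ᵥ x‖₊ := Finset.le_sup (f := fun x => ‖V *ᵥ x‖₊) hx
    have h2 : (‖V *ᵥ x‖₊ : ℝ) ≤ ((Ω.sup fun x => ‖V *ᵥ x‖₊ : NNReal) : ℝ) := by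
      exact_mod_cast h1
    rw [coe_nnnorm] at h2
    rw [ht]
    linarith
  set W := WW n K A.rank U V with hW
  set c := cc n K A.rank U V bb t with hc
  have hpos : ∀ x ∈ Ω, ∀ (a : ℕ) (j : Fin a), 1 ≤ (Emb a A.rank *ᵥ (V *ᵥ x)) j + t := by
    intro x hx a j
    have h1 := Emb_mulVec_abs_le (V *ᵥ x) j
    have h2 := hVbound x hx
    have h3 := (abs_le.mp h1).1
    linarith
  have hpre : ∀ x ∈ Ω, ∀ k, k < K →
      preact n W c x k = fun j => (Emb (n (k + 1)) A.rank *ᵥ (V *ᵥ x)) j + t := by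
    intro x hx k
    induction k with
    | zero =>
      intro h0K
      have hK0 : K ≠ 0 := by omega
      funext j
      show (W 0 *ᵥ x) j + c 0 j = _
      rw [hW, hc, WW_zero n K A.rank U V hK0, cc_zero n K A.rank U V bb t hK0,
        ← Matrix.mulVec_mulVec]
    | succ k ih =>
      intro hk1K
      have hkK : k < K := by omega
      have hsle1 : A.rank ≤ n (k + 1) := hsle _ (by omega)
      have hactk : act n W c x (k + 1)
          = Emb (n (k + 1)) A.rank *ᵥ (V *ᵥ x) + fun _ => t := by
        have e : act n W c x (k + 1) = fun j => max (preact n W c x k j) 0 := rfl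
        rw [e, ih hkK]
        funext j
        exact max_eq_left (le_trans zero_le_one (hpos x hx _ j))
      funext j
      show (W (k + 1) *ᵥ act n W c x (k + 1)) j + c (k + 1) j = _
      rw [hactk, hW, hc, cc_mid n K A.rank U V bb t (Nat.succ_ne_zero k) (by omega),
        WW_mid n K A.rank U V (Nat.succ_ne_zero k) (by omega),
        Matrix.mulVec_add]
      have hM : (Emb (n (k + 2)) A.rank * (Emb (n (k + 1)) A.rank)ᵀ) *ᵥ
          (Emb (n (k + 1)) A.rank *ᵥ (V *ᵥ x)) = Emb (n (k + 2)) A.rank *ᵥ (V *ᵥ x) := by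
        rw [← Matrix.mulVec_mulVec, EmbT_Emb_mulVec hsle1]
      simp only [Pi.add_apply, Pi.sub_apply, hM]
      ring
  have hact : ∀ x ∈ Ω, ∀ k, k < K →
      act n W c x (k + 1) = Emb (n (k + 1)) A.rank *ᵥ (V *ᵥ x) + fun _ => t := by
    intro x hx k hk
    have e : act n W c x (k + 1) = fun j => max (preact n W c x k j) 0 := rfl
    rw [e, hpre x hx k hk]
    funext j
    exact max_eq_left (le_trans zero_le_one (hpos x hx _ j))
  refine ⟨W, c, 1, one_pos, ?_, ?_⟩
  · intro x hx
    show preact n W c x K = A *ᵥ x + bb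
    by_cases hK0 : K = 0
    · subst hK0
      funext j
      show (W 0 *ᵥ x) j + c 0 j = _
      rw [hW, hc, WW_zero_zero n A.rank U V, cc_zero_zero n A.rank U V bb t, hUV]
      rfl
    · obtain ⟨m, rfl⟩ := Nat.exists_eq_succ_of_ne_zero hK0
      funext j
      show (W (m + 1) *ᵥ act n W c x (m + 1)) j + c (m + 1) j = _
      rw [hact x hx m (lt_add_one m), hW, hc,
        cc_last n (m + 1) A.rank U V bb t hK0, WW_last n (m + 1) A.rank U V hK0,
        Matrix.mulVec_add]
      have hsleK : A.rank ≤ n (m + 1) := hsle _ (by omega)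
      have hM : (U * (Emb (n (m + 1)) A.rank)ᵀ) *ᵥ
          (Emb (n (m + 1)) A.rank *ᵥ (V *ᵥ x)) = A *ᵥ x := by
        rw [← Matrix.mulVec_mulVec, EmbT_Emb_mulVec hsleK, Matrix.mulVec_mulVec, hUV]
      simp only [Pi.add_apply, Pi.sub_apply, hM]
      ring
  · intro x hx k hk j
    rw [hpre x hx k hk]
    exact hpos x hx _ j
end

section
/- Let L ≥ 1 and fix layer widths n_0 = m, n_1, …, n_L = n, let s = min_{0 ≤ i ≤ L} n_i, and let 0 ≤ r ≤ s. For every affine function G(x) = A x + b with rank(A) = r and every finite subset Ω ⊂ ℝ^m, there exists a parameter vector φ such that F_φ(x) = G(x) for all x ∈ Ω; that is, the family of L-layer ReLU MLPs with these widths has rank-r affine expression for every r ≤ s. -/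
open Matrix

lemma act_succ' (n A b x k j) : act n A b x (k + 1) j
    = max ((A k).mulVec (act n A b x k) j + b k j) 0 := rfl

lemma sum_dite_lt_s2 {N r : ℕ} (hrN : r ≤ N) (f : Fin r → ℝ) :
    ∑ k : Fin N, (if h : (k : ℕ) < r then f ⟨k, h⟩ else 0) = ∑ i : Fin r, f i := by
  have h2 : (∑ i : Fin r, f i)
      = ∑ i ∈ Finset.range r, (fun i : ℕ => if h : i < r then f ⟨i, h⟩ else 0) i := by
    rw [← Fin.sum_univ_eq_sum_range]
    refine Finset.sum_congr rfl fun i _ => ?_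
    rw [dif_pos i.isLt]
  rw [h2, Fin.sum_univ_eq_sum_range (fun i : ℕ => if h : i < r then f ⟨i, h⟩ else 0) N]
  refine (Finset.sum_subset (Finset.range_subset_range.mpr hrN) ?_).symm
  intro i _ hi
  rw [dif_neg (by simpa using hi)]

lemma exists_factorization_s2 {p q r : ℕ} (A : Matrix (Fin p) (Fin q) ℝ) (h : A.rank = r) :
    ∃ (P : Matrix (Fin p) (Fin r) ℝ) (Q : Matrix (Fin r) (Fin q) ℝ),
      ∀ x, A.mulVec x = P.mulVec (Q.mulVec x) := by
  set L := A.mulVecLin with hL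
  have hfr : Module.finrank ℝ (LinearMap.range L) = r := h
  let B : Module.Basis (Fin r) ℝ (LinearMap.range L) := Module.finBasisOfFinrankEq ℝ _ hfr
  refine ⟨Matrix.of fun i j => (B j : Fin p → ℝ) i,
          Matrix.of fun j k => B.repr (L.rangeRestrict (Pi.single k 1)) j, fun x => ?_⟩
  have h1 : ∀ j, (Matrix.of fun j k => B.repr (L.rangeRestrict (Pi.single k 1)) j).mulVec x j
      = B.repr (L.rangeRestrict x) j := by
    intro j
    have hx : x = ∑ k, x k • (Pi.single k 1 : Fin q → ℝ) := by
      funext i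
      simp [Pi.single_apply, Finset.sum_ite_eq]
    simp only [Matrix.mulVec, dotProduct, Matrix.of_apply]
    conv_rhs => rw [hx]
    rw [map_sum, map_sum]
    simp [Finset.sum_apply', _root_.map_smul, mul_comm]
  have h2 : (∑ j, B.repr (L.rangeRestrict x) j • (B j : Fin p → ℝ)) = A.mulVec x := by
    have h3 := B.sum_repr (L.rangeRestrict x)
    have h4 : ((∑ j, B.repr (L.rangeRestrict x) j • B j : LinearMap.range L) : Fin p → ℝ)
        = ∑ j, B.repr (L.rangeRestrict x) j • (B j : Fin p → ℝ) := by
      push_cast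
      rfl
    rw [← h4, h3]
    simp [hL]
  funext i
  have h5 := congrFun h2 i
  simp only [Finset.sum_apply, Pi.smul_apply, smul_eq_mul] at h5
  rw [← h5]
  simp only [Matrix.mulVec, dotProduct, Matrix.of_apply]
  refine Finset.sum_congr rfl fun j _ => ?_
  rw [mul_comm]
  exact congrArg (fun t => (B j : Fin p → ℝ) i * t) (h1 j).symm


/-- The family of `(K+1)`-layer ReLU MLPs with widths `n 0, …, n (K+1)`
has rank-`r` affine expression for every `r ≤ s = min_{0 ≤ i ≤ K+1} n i`. -/
theorem rank_le_s_affine_expression (n : ℕ → ℕ) (K : ℕ) (r : ℕ)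
    (hr : r ≤ (Finset.range (K + 2)).inf' (by simp) n)
    (A : Matrix (Fin (n (K + 1))) (Fin (n 0)) ℝ) (bb : Fin (n (K + 1)) → ℝ)
    (hrank : A.rank = r)
    (Ω : Finset (Fin (n 0) → ℝ)) :
    ∃ (W : ∀ i : ℕ, Matrix (Fin (n (i + 1))) (Fin (n i)) ℝ)
      (c : ∀ i : ℕ, Fin (n (i + 1)) → ℝ),
      ∀ x ∈ Ω, mlp n W c K x = A.mulVec x + bb := by
  classical
  have hn : ∀ i, i ≤ K + 1 → r ≤ n i := fun i hi =>
    hr.trans (Finset.inf'_le n (Finset.mem_range.mpr (by omega)))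
  obtain ⟨P, Q, hPQ⟩ := exists_factorization_s2 A hrank
  cases K with
  | zero =>
    refine ⟨fun i => match i with | 0 => A | _+1 => 0,
            fun i => match i with | 0 => bb | _+1 => 0, fun x _ => ?_⟩
    funext j
    simp [mlp, preact, act]
  | succ K0 =>
    set M : ℝ := ((Ω.sup fun y => ‖Q.mulVec y‖₊ : NNReal) : ℝ) with hMdef
    have hM : ∀ y ∈ Ω, ∀ i : Fin r, 0 ≤ Q.mulVec y i + M := by
      intro y hy i
      have h1 : |Q.mulVec y i| ≤ ‖Q.mulVec y‖ := by
        simpa using norm_le_pi_norm (Q.mulVec y) i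
      have h2 : ‖Q.mulVec y‖ ≤ M := by
        have := Finset.le_sup (f := fun y => ‖Q.mulVec y‖₊) hy
        rw [hMdef]
        exact_mod_cast this
      linarith [neg_abs_le (Q.mulVec y i), h1.trans h2]
    obtain ⟨W, hW0, hWmid, hWlast⟩ :
        ∃ W : ∀ i : ℕ, Matrix (Fin (n (i + 1))) (Fin (n i)) ℝ,
          (∀ (j : Fin (n 1)) k, W 0 j k = if h : (j : ℕ) < r then Q ⟨j, h⟩ k else 0) ∧
          (∀ i, i ≠ 0 → i ≠ K0 + 1 → ∀ (j : Fin (n (i + 1))) k,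
            W i j k = if (j : ℕ) = (k : ℕ) ∧ (j : ℕ) < r then 1 else 0) ∧
          (∀ (j : Fin (n (K0 + 2))) (k : Fin (n (K0 + 1))),
            W (K0 + 1) j k = if h : (k : ℕ) < r then P j ⟨k, h⟩ else 0) := by
      refine ⟨fun i => Matrix.of fun j k =>
          if h0 : i = 0 then
            (if h : (j : ℕ) < r then Q ⟨j, h⟩ (Fin.cast (by rw [h0]) k) else 0)
          else if hiK : i = K0 + 1 then
            (if h : (k : ℕ) < r then P (Fin.cast (by rw [hiK]) j) ⟨k, h⟩ else 0)
          else (if (j : ℕ) = (k : ℕ) ∧ (j : ℕ) < r then 1 else 0), ?_, ?_, ?_⟩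
      · intro j k
        simp only [Matrix.of_apply]
        rw [dif_pos trivial]
        have hgen : ∀ k' : Fin (n 0), k' = k →
            (if h : (j : ℕ) < r then Q ⟨j, h⟩ k' else 0)
              = (if h : (j : ℕ) < r then Q ⟨j, h⟩ k else 0) := fun k' hk => by rw [hk]
        exact hgen _ (Fin.ext rfl)
      · intro i h0 hK j k
        simp only [Matrix.of_apply]
        rw [dif_neg h0, dif_neg hK]
      · intro j k
        simp only [Matrix.of_apply]
        rw [dif_pos trivial]
        have hgen : ∀ j' : Fin (n (K0 + 2)), j' = j →
            (if h : (k : ℕ) < r then P j' ⟨k, h⟩ else 0)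
              = (if h : (k : ℕ) < r then P j ⟨k, h⟩ else 0) := fun j' hj => by rw [hj]
        exact hgen _ (Fin.ext rfl)
    obtain ⟨c, hc0, hcmid, hclast⟩ :
        ∃ c : ∀ i : ℕ, Fin (n (i + 1)) → ℝ,
          (∀ j : Fin (n 1), c 0 j = if (j : ℕ) < r then M else 0) ∧
          (∀ i, i ≠ 0 → i ≠ K0 + 1 → ∀ j : Fin (n (i + 1)), c i j = 0) ∧
          (∀ j : Fin (n (K0 + 2)),
            c (K0 + 1) j = bb j - M * ∑ t : Fin r, P j t) := by
      refine ⟨fun i j =>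
          if i = 0 then (if (j : ℕ) < r then M else 0)
          else if hiK : i = K0 + 1 then
            bb (Fin.cast (by rw [hiK]) j) - M * ∑ t : Fin r, P (Fin.cast (by rw [hiK]) j) t
          else 0, ?_, ?_, ?_⟩
      · intro j
        simp only [Matrix.of_apply]
        rw [if_pos trivial]
      · intro i h0 hK j
        simp only []
        rw [if_neg h0, dif_neg hK]
      · intro j
        simp only []
        rw [dif_pos trivial]
        have hgen : ∀ j' : Fin (n (K0 + 2)), j' = j →
            bb j' - M * ∑ t : Fin r, P j' t = bb j - M * ∑ t : Fin r, P j t :=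
          fun j' hj => by rw [hj]
        exact hgen _ (Fin.ext rfl)
    refine ⟨W, c, fun x hx => ?_⟩
    -- the key invariant
    have key : ∀ k, k ≤ K0 → ∀ j : Fin (n (k + 1)),
        act n W c x (k + 1) j
          = if h : (j : ℕ) < r then Q.mulVec x ⟨j, h⟩ + M else 0 := by
      intro k
      induction k with
      | zero =>
        intro _ j
        rw [act_succ']
        rcases Nat.lt_or_ge (j : ℕ) r with h | h
        · have hmv : (W 0).mulVec (act n W c x 0) j = Q.mulVec x ⟨j, h⟩ := by
            simp only [Matrix.mulVec, dotProduct]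
            refine Finset.sum_congr rfl fun t _ => ?_
            rw [hW0, dif_pos h]
            rfl
          rw [dif_pos h]
          simp only [hmv, hc0, if_pos h]
          exact max_eq_left (hM x hx ⟨j, h⟩)
        · have hmv : (W 0).mulVec (act n W c x 0) j = 0 := by
            simp only [Matrix.mulVec, dotProduct]
            refine Finset.sum_eq_zero fun t _ => ?_
            rw [hW0, dif_neg (by omega), zero_mul]
          rw [dif_neg (by omega)]
          simp [hmv, hc0, if_neg (by omega : ¬ (j : ℕ) < r)]
      | succ k ih =>
        intro hk j
        rw [act_succ']
        have hcz : c (k + 1) j = 0 := hcmid (k + 1) (by omega) (by omega) j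
        rcases Nat.lt_or_ge (j : ℕ) r with h | h
        · have hj' : (j : ℕ) < n (k + 1) := lt_of_lt_of_le h (hn (k + 1) (by omega))
          set j' : Fin (n (k + 1)) := ⟨(j : ℕ), hj'⟩ with hj'def
          have hmv : (W (k + 1)).mulVec (act n W c x (k + 1)) j
              = act n W c x (k + 1) j' := by
            simp only [Matrix.mulVec, dotProduct]
            rw [Finset.sum_eq_single j']
            · rw [hWmid (k + 1) (by omega) (by omega), if_pos ⟨rfl, h⟩, one_mul]
            · intro t _ ht
              rw [hWmid (k + 1) (by omega) (by omega), if_neg, zero_mul]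
              rintro ⟨hv, -⟩
              exact ht (Fin.ext hv.symm)
            · intro habs
              exact absurd (Finset.mem_univ j') habs
          have hval := ih (by omega) j'
          rw [dif_pos (show (j' : ℕ) < r from h)] at hval
          rw [dif_pos h, hmv, hval, hcz, add_zero]
          exact max_eq_left (hM x hx ⟨j, h⟩)
        · have hmv : (W (k + 1)).mulVec (act n W c x (k + 1)) j = 0 := by
            simp only [Matrix.mulVec, dotProduct]
            refine Finset.sum_eq_zero fun t _ => ?_
            rw [hWmid (k + 1) (by omega) (by omega), if_neg, zero_mul]
            rintro ⟨-, hv⟩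
            omega
          rw [dif_neg (by omega), hmv, hcz, add_zero, max_self]
    -- final layer
    funext j
    have hact := key K0 le_rfl
    have hmv : (W (K0 + 1)).mulVec (act n W c x (K0 + 1)) j
        = ∑ i : Fin r, P j i * (Q.mulVec x i + M) := by
      rw [← sum_dite_lt_s2 (hn (K0 + 1) (by omega))
        (fun i : Fin r => P j i * (Q.mulVec x i + M))]
      simp only [Matrix.mulVec, dotProduct]
      refine Finset.sum_congr rfl fun t _ => ?_
      rw [hWlast, hact t]
      rcases Nat.lt_or_ge (t : ℕ) r with h | h
      · rw [dif_pos h, dif_pos h, dif_pos h]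
        rfl
      · rw [dif_neg (by omega), dif_neg (by omega), dif_neg (by omega), zero_mul]
    have hstart : mlp n W c (K0 + 1) x j
        = (W (K0 + 1)).mulVec (act n W c x (K0 + 1)) j + c (K0 + 1) j := rfl
    have hPm : (P.mulVec (Q.mulVec x)) j = ∑ i : Fin r, P j i * (Q.mulVec x) i := rfl
    have hsum : ∑ i : Fin r, P j i * (Q.mulVec x i + M)
        = (∑ i : Fin r, P j i * Q.mulVec x i) + M * ∑ t : Fin r, P j t := by
      rw [Finset.mul_sum, ← Finset.sum_add_distrib]
      exact Finset.sum_congr rfl fun i _ => by ring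
    rw [hstart, hmv, hclast, hsum, Pi.add_apply, hPQ x, hPm]
    ring
end

section
/- Let L ≥ 1 and fix layer widths n_0 = m, n_1, …, n_L = n with n_i ≥ min(m, n) for all i. Then the family of L-layer ReLU MLPs with these widths has full affine expression: for every affine function G : ℝ^m → ℝ^n, G(x) = A x + b (with A of arbitrary rank), and every finite subset Ω ⊂ ℝ^m, there exists a parameter vector φ with F_φ(x) = G(x) for all x ∈ Ω. -/
open Matrix

/-- Any real matrix factors through `ℝ^(min m n)`. -/
lemma matrix_factor {m' n' : ℕ} (A : Matrix (Fin n') (Fin m') ℝ) :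
    ∃ (P : Matrix (Fin n') (Fin (min m' n')) ℝ)
      (Q : Matrix (Fin (min m' n')) (Fin m') ℝ), P * Q = A := by
  rcases le_total m' n' with h | h
  · have e : Fin (min m' n') ≃ Fin m' := finCongr (min_eq_left h)
    refine ⟨A.submatrix id e, (1 : Matrix (Fin m') (Fin m') ℝ).submatrix e id, ?_⟩
    rw [Matrix.submatrix_mul_equiv, Matrix.mul_one, Matrix.submatrix_id_id]
  · have e : Fin (min m' n') ≃ Fin n' := finCongr (min_eq_right h)
    refine ⟨(1 : Matrix (Fin n') (Fin n') ℝ).submatrix id e, A.submatrix e id, ?_⟩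
    rw [Matrix.submatrix_mul_equiv, Matrix.one_mul, Matrix.submatrix_id_id]

/-- Summing a dite-supported function over `Fin N` equals the sum over `Fin r`. -/
lemma dsum_lt {N r : ℕ} (h : r ≤ N) (g : Fin r → ℝ) :
    (∑ k : Fin N, if hk : (k : ℕ) < r then g ⟨k, hk⟩ else 0) = ∑ k : Fin r, g k := by
  set f : ℕ → ℝ := fun i => if hk : i < r then g ⟨i, hk⟩ else 0 with hf
  calc (∑ k : Fin N, if hk : (k : ℕ) < r then g ⟨k, hk⟩ else 0)
      = ∑ k : Fin N, f k := rfl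
    _ = ∑ i ∈ Finset.range N, f i := Fin.sum_univ_eq_sum_range f N
    _ = ∑ i ∈ Finset.range r, f i := by
        refine (Finset.sum_subset (Finset.range_subset_range.2 h) fun i _ hi => ?_).symm
        rw [Finset.mem_range] at hi
        exact dif_neg hi
    _ = ∑ k : Fin r, f k := (Fin.sum_univ_eq_sum_range f r).symm
    _ = ∑ k : Fin r, g k := by
        refine Finset.sum_congr rfl fun k _ => ?_
        rw [hf]
        exact dif_pos k.isLt

/-- If all layer widths are at least `min(m, n) = min (n 0) (n (K+1))`,
the family of `(K+1)`-layer ReLU MLPs has full affine expression: every affine function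
`G(x) = A x + b` (of arbitrary rank) can be matched exactly on any finite set `Ω`. -/
theorem full_affine_expression (n : ℕ → ℕ) (K : ℕ)
    (hwide : ∀ i ≤ K + 1, min (n 0) (n (K + 1)) ≤ n i)
    (A : Matrix (Fin (n (K + 1))) (Fin (n 0)) ℝ) (bb : Fin (n (K + 1)) → ℝ)
    (Ω : Finset (Fin (n 0) → ℝ)) :
    ∃ (W : ∀ i : ℕ, Matrix (Fin (n (i + 1))) (Fin (n i)) ℝ)
      (c : ∀ i : ℕ, Fin (n (i + 1)) → ℝ),
      ∀ x ∈ Ω, mlp n W c K x = A.mulVec x + bb := by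
  rcases Nat.eq_zero_or_pos K with hK0 | hK1
  · subst hK0
    refine ⟨(fun i => match i with | 0 => A | _+1 => 0),
            (fun i => match i with | 0 => bb | _+1 => 0), fun x hx => ?_⟩
    funext j
    rfl
  -- Main case: K ≥ 1.
  set r : ℕ := min (n 0) (n (K + 1)) with hrdef
  obtain ⟨P, Q, hPQ⟩ := matrix_factor A
  have hw : ∀ i ≤ K + 1, r ≤ n i := hwide
  set cs : Fin r → ℝ := fun j => ∑ x ∈ Ω, |Q.mulVec x j| with hcs
  have hpos : ∀ x ∈ Ω, ∀ j, 0 ≤ Q.mulVec x j + cs j := by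
    intro x hx j
    have h1 : |Q.mulVec x j| ≤ ∑ y ∈ Ω, |Q.mulVec y j| :=
      Finset.single_le_sum (f := fun y => |Q.mulVec y j|) (fun y _ => abs_nonneg _) hx
    have h2 := neg_abs_le (Q.mulVec x j)
    have h3 : cs j = ∑ y ∈ Ω, |Q.mulVec y j| := rfl
    linarith
  set W : ∀ i : ℕ, Matrix (Fin (n (i + 1))) (Fin (n i)) ℝ := fun i =>
    if h0 : i = 0 then
      Matrix.of fun j k =>
        if hj : (j : ℕ) < r then Q ⟨j, hj⟩ ⟨k, by rw [← h0]; exact k.isLt⟩ else 0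
    else if hK : i = K then
      Matrix.of fun j k =>
        if hk : (k : ℕ) < r then P ⟨j, by rw [← hK]; exact j.isLt⟩ ⟨k, hk⟩ else 0
    else Matrix.of fun j k => if (j : ℕ) = (k : ℕ) ∧ (j : ℕ) < r then 1 else 0
    with hW
  set c : ∀ i : ℕ, Fin (n (i + 1)) → ℝ := fun i =>
    if h0 : i = 0 then
      fun j => if hj : (j : ℕ) < r then cs ⟨j, hj⟩ else 0
    else if hK : i = K then
      fun j => bb ⟨j, by rw [← hK]; exact j.isLt⟩
        - P.mulVec cs ⟨j, by rw [← hK]; exact j.isLt⟩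
    else 0
    with hc
  refine ⟨W, c, fun x hx => ?_⟩
  -- the invariant on hidden layers
  have inv : ∀ i, 1 ≤ i → i ≤ K → ∀ j : Fin (n i),
      act n W c x i j =
        if hj : (j : ℕ) < r then Q.mulVec x ⟨j, hj⟩ + cs ⟨j, hj⟩ else 0 := by
    intro i
    induction i with
    | zero => omega
    | succ i ih =>
      intro _ hiK j
      rcases Nat.eq_zero_or_pos i with hi0 | hi1
      · -- base layer, i = 0
        subst hi0
        have hW0 : W 0 = Matrix.of fun (j : Fin (n 1)) (k : Fin (n 0)) =>
            if hj : (j : ℕ) < r then Q ⟨j, hj⟩ ⟨k, k.isLt⟩ else 0 := by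
          rw [hW]; simp
        show max ((W 0).mulVec x j + c 0 j) 0 = _
        rw [hW0]
        have hc0 : c 0 j = if hj : (j : ℕ) < r then cs ⟨j, hj⟩ else 0 := by
          rw [hc]; simp
        by_cases hj : (j : ℕ) < r
        · have hmv : (Matrix.of fun (j : Fin (n 1)) (k : Fin (n 0)) =>
              if hj : (j : ℕ) < r then Q ⟨j, hj⟩ ⟨k, k.isLt⟩ else 0).mulVec x j
              = Q.mulVec x ⟨j, hj⟩ := by
            simp only [Matrix.mulVec, dotProduct, Matrix.of_apply, dif_pos hj]
          rw [hmv, hc0, dif_pos hj, dif_pos hj]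
          exact max_eq_left (hpos x hx ⟨j, hj⟩)
        · have hmv : (Matrix.of fun (j : Fin (n 1)) (k : Fin (n 0)) =>
              if hj : (j : ℕ) < r then Q ⟨j, hj⟩ ⟨k, k.isLt⟩ else 0).mulVec x j = 0 := by
            simp only [Matrix.mulVec, dotProduct, Matrix.of_apply, dif_neg hj]
            simp
          rw [hmv, hc0, dif_neg hj, dif_neg hj]
          simp
      · -- middle layer, 1 ≤ i ≤ K - 1
        have hine : i ≠ 0 := by omega
        have hiK' : i ≠ K := by omega
        have hWi : W i = Matrix.of fun (j : Fin (n (i+1))) (k : Fin (n i)) =>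
            if (j : ℕ) = (k : ℕ) ∧ (j : ℕ) < r then 1 else 0 := by
          rw [hW]; simp [hine, hiK']
        have hci : c i = 0 := by rw [hc]; simp [hine, hiK']
        have hri : r ≤ n i := hw i (by omega)
        have ihv := ih hi1 (by omega)
        show max ((W i).mulVec (act n W c x i) j + c i j) 0 = _
        rw [hWi, hci]
        set v := act n W c x i with hv
        by_cases hj : (j : ℕ) < r
        · have hjn : (j : ℕ) < n i := lt_of_lt_of_le hj hri
          have hmv : (Matrix.of fun (j : Fin (n (i+1))) (k : Fin (n i)) =>
              if (j : ℕ) = (k : ℕ) ∧ (j : ℕ) < r then (1:ℝ) else 0).mulVec v j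
              = v ⟨j, hjn⟩ := by
            simp only [Matrix.mulVec, dotProduct, Matrix.of_apply, ite_mul, one_mul,
              zero_mul]
            have heq : ∀ k : Fin (n i),
                (if (j : ℕ) = (k : ℕ) ∧ (j : ℕ) < r then v k else 0)
                = if (⟨(j : ℕ), hjn⟩ : Fin (n i)) = k then v k else 0 := by
              intro k
              refine if_congr ?_ rfl rfl
              constructor
              · rintro ⟨h1, _⟩; exact Fin.ext h1
              · intro h1; exact ⟨congrArg Fin.val h1, hj⟩
            rw [Finset.sum_congr rfl fun k _ => heq k, Finset.sum_ite_eq]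
            exact if_pos (Finset.mem_univ _)
          rw [hmv]
          have hvv : v ⟨j, hjn⟩ = Q.mulVec x ⟨j, hj⟩ + cs ⟨j, hj⟩ := by
            rw [ihv ⟨j, hjn⟩, dif_pos hj]
          rw [hvv, dif_pos hj, Pi.zero_apply, add_zero]
          exact max_eq_left (hpos x hx ⟨j, hj⟩)
        · have hmv : (Matrix.of fun (j : Fin (n (i+1))) (k : Fin (n i)) =>
              if (j : ℕ) = (k : ℕ) ∧ (j : ℕ) < r then (1:ℝ) else 0).mulVec v j = 0 := by
            simp only [Matrix.mulVec, dotProduct, Matrix.of_apply]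
            apply Finset.sum_eq_zero
            intro k _
            rw [if_neg (by tauto), zero_mul]
          rw [hmv, dif_neg hj, Pi.zero_apply]
          simp
  -- the final layer
  have hKne' : K ≠ 0 := by omega
  have hWK : W K = Matrix.of fun (j : Fin (n (K+1))) (k : Fin (n K)) =>
      if hk : (k : ℕ) < r then P j ⟨k, hk⟩ else 0 := by
    rw [hW]; simp [hKne']
  have hcK : c K = fun j => bb j - P.mulVec cs j := by
    rw [hc]; simp [hKne']
  have hrK : r ≤ n K := hw K (by omega)
  have hactK := inv K hK1 le_rfl
  funext j
  show (W K).mulVec (act n W c x K) j + c K j = _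
  rw [hWK, hcK]
  have hmv : (Matrix.of fun (j : Fin (n (K+1))) (k : Fin (n K)) =>
      if hk : (k : ℕ) < r then P j ⟨k, hk⟩ else 0).mulVec (act n W c x K) j
      = P.mulVec (fun k => Q.mulVec x k + cs k) j := by
    simp only [Matrix.mulVec, dotProduct, Matrix.of_apply]
    have heq : ∀ k : Fin (n K),
        (if hk : (k : ℕ) < r then P j ⟨k, hk⟩ else 0) * act n W c x K k
        = if hk : (k : ℕ) < r then
            P j ⟨k, hk⟩ * (Q.mulVec x ⟨k, hk⟩ + cs ⟨k, hk⟩) else 0 := by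
      intro k
      by_cases hk : (k : ℕ) < r
      · rw [dif_pos hk, dif_pos hk, hactK k, dif_pos hk]
      · rw [dif_neg hk, dif_neg hk, zero_mul]
    rw [Finset.sum_congr rfl fun k _ => heq k]
    exact (dsum_lt hrK fun k => P j k * (Q.mulVec x k + cs k)).trans rfl
  rw [hmv]
  have hdist : P.mulVec (fun k => Q.mulVec x k + cs k) j
      = P.mulVec (Q.mulVec x) j + P.mulVec cs j := by
    have h4 : (fun k => Q.mulVec x k + cs k) = Q.mulVec x + cs := rfl
    rw [h4, Matrix.mulVec_add]
    rfl
  rw [hdist, Matrix.mulVec_mulVec, hPQ]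
  show A.mulVec x j + P.mulVec cs j + (bb j - P.mulVec cs j) = A.mulVec x j + bb j
  ring
end

section
/- Consider a training set {(x_i, y_i)}_{i=1}^N with x_i ∈ ℝ^m, a family of L-layer ReLU MLPs F_φ : ℝ^m → ℝ^n with layer widths n_0 = m, n_1, …, n_L = n, and let s = min_{0 ≤ i ≤ L} n_i. Let ℓ : (ℝ^n)^N → ℝ be continuous, and define the affine training objective L_aff(A, b) = ℓ(A x_1 + b, …, A x_N + b) and the MLP training objective L_MLP(φ) = ℓ(F_φ(x_1), …, F_φ(x_N)). Suppose (A', b') with rank(A') ≤ s is a local minimum of L_aff subject to the constraint rank(A) ≤ s, i.e. there exists ε > 0 such that L_aff(A', b') ≤ L_aff(A, b) for all (A, b) with rank(A) ≤ s and ‖A − A'‖ + ‖b − b'‖ < ε. Then there exists a parameter vector φ' that is an (unconstrained) local minimum of L_MLP and satisfies F_{φ'}(x_i) = A' x_i + b' for all i = 1, …, N. -/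
open Matrix

/-- Euclidean distance between the parameter vectors `(A, b)` and `(A', b')` of a
`(K+1)`-layer MLP, i.e. the Euclidean norm of the concatenation of all entries of the
differences of the weight matrices and bias vectors of layers `1, …, K+1`. -/
noncomputable def paramDist (n : ℕ → ℕ) (K : ℕ)
    (A A' : ∀ i : ℕ, Matrix (Fin (n (i + 1))) (Fin (n i)) ℝ)
    (b b' : ∀ i : ℕ, Fin (n (i + 1)) → ℝ) : ℝ :=
  Real.sqrt (∑ i ∈ Finset.range (K + 1),
    ((∑ j, ∑ k, (A i j k - A' i j k) ^ 2) + ∑ j, (b i j - b' i j) ^ 2))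

/-- Frobenius (Euclidean) norm of a matrix. -/
noncomputable def matNorm {p q : ℕ} (M : Matrix (Fin p) (Fin q) ℝ) : ℝ :=
  Real.sqrt (∑ j, ∑ k, (M j k) ^ 2)

/-- Euclidean norm of a vector. -/
noncomputable def vecNorm {p : ℕ} (v : Fin p → ℝ) : ℝ :=
  Real.sqrt (∑ j, (v j) ^ 2)

namespace MLPAux

/-! ### Embedding matrices and rank factorization -/

/-- 0/1 embedding matrix of `ℝ^s` into `ℝ^p` (first `s` coordinates). -/
noncomputable def emb (s p : ℕ) : Matrix (Fin p) (Fin s) ℝ :=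
  Matrix.of fun j a => if (j : ℕ) = (a : ℕ) then 1 else 0

lemma emb_nonneg (s p : ℕ) (j : Fin p) (a : Fin s) : 0 ≤ emb s p j a := by
  unfold emb; simp only [of_apply]; split <;> norm_num

lemma emb_abs_le (s p : ℕ) (j : Fin p) (a : Fin s) : |emb s p j a| ≤ 1 := by
  unfold emb; simp only [of_apply]; split <;> norm_num

lemma embT_mul_emb {s p : ℕ} (h : s ≤ p) :
    (emb s p)ᵀ * emb s p = (1 : Matrix (Fin s) (Fin s) ℝ) := by
  ext a b
  simp only [Matrix.mul_apply, transpose_apply, emb, of_apply, Matrix.one_apply]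
  rw [Finset.sum_eq_single (⟨(a : ℕ), lt_of_lt_of_le a.2 h⟩ : Fin p)]
  · by_cases hab : a = b
    · subst hab; simp
    · have : (a : ℕ) ≠ (b : ℕ) := fun hc => hab (Fin.ext hc)
      simp [this, hab]
  · intro j _ hj
    have : (j : ℕ) ≠ (a : ℕ) := fun hc => hj (Fin.ext hc)
    simp [this]
  · simp

lemma exists_rank_factorization {p q s : ℕ} (A : Matrix (Fin p) (Fin q) ℝ)
    (h : A.rank ≤ s) :
    ∃ (U : Matrix (Fin p) (Fin s) ℝ) (V : Matrix (Fin s) (Fin q) ℝ), A = U * V := by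
  classical
  set W := LinearMap.range A.mulVecLin with hW
  have hr : Module.finrank ℝ W ≤ s := h
  let B := Module.finBasis ℝ W
  let e : W ≃ₗ[ℝ] (Fin (Module.finrank ℝ W) → ℝ) := B.equivFun
  let J : Matrix (Fin s) (Fin (Module.finrank ℝ W)) ℝ := emb _ s
  let f : (Fin q → ℝ) →ₗ[ℝ] (Fin s → ℝ) :=
    (Matrix.toLin' J) ∘ₗ (e : W →ₗ[ℝ] _) ∘ₗ A.mulVecLin.rangeRestrict
  let g : (Fin s → ℝ) →ₗ[ℝ] (Fin p → ℝ) :=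
    W.subtype ∘ₗ (e.symm : _ →ₗ[ℝ] W) ∘ₗ (Matrix.toLin' Jᵀ)
  have hgf : g ∘ₗ f = A.mulVecLin := by
    apply LinearMap.ext; intro v
    have hJ : Matrix.toLin' Jᵀ (Matrix.toLin' J (e (A.mulVecLin.rangeRestrict v))) =
        e (A.mulVecLin.rangeRestrict v) := by
      rw [← Matrix.toLin'_mul_apply, embT_mul_emb hr, Matrix.toLin'_one, LinearMap.id_apply]
    simp only [g, f, LinearMap.comp_apply, LinearEquiv.coe_coe, hJ,
      LinearEquiv.symm_apply_apply, Submodule.coe_subtype, LinearMap.rangeRestrict,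
      LinearMap.codRestrict_apply]
  refine ⟨LinearMap.toMatrix' g, LinearMap.toMatrix' f, ?_⟩
  rw [← LinearMap.toMatrix'_comp, hgf, ← Matrix.toLin'_apply' A, LinearMap.toMatrix'_toLin']

/-! ### Affine data of a parameter family -/

/-- product of the first `k` weight matrices -/
noncomputable def Mprod (n : ℕ → ℕ)
    (A : ∀ i : ℕ, Matrix (Fin (n (i + 1))) (Fin (n i)) ℝ) :
    (k : ℕ) → Matrix (Fin (n k)) (Fin (n 0)) ℝ
  | 0 => 1
  | k + 1 => A k * Mprod n A k

/-- accumulated bias through the first `k` layers -/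
noncomputable def vsum (n : ℕ → ℕ)
    (A : ∀ i : ℕ, Matrix (Fin (n (i + 1))) (Fin (n i)) ℝ)
    (b : ∀ i : ℕ, Fin (n (i + 1)) → ℝ) : (k : ℕ) → Fin (n k) → ℝ
  | 0 => 0
  | k + 1 => (A k).mulVec (vsum n A b k) + b k

variable {n : ℕ → ℕ}

lemma act_congr (A₁ A₂ : ∀ i : ℕ, Matrix (Fin (n (i + 1))) (Fin (n i)) ℝ)
    (b₁ b₂ : ∀ i : ℕ, Fin (n (i + 1)) → ℝ) (x : Fin (n 0) → ℝ) (k : ℕ)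
    (hA : ∀ i < k, A₁ i = A₂ i) (hb : ∀ i < k, b₁ i = b₂ i) :
    act n A₁ b₁ x k = act n A₂ b₂ x k := by
  induction k with
  | zero => rfl
  | succ k ih =>
    have h1 := ih (fun i hi => hA i (hi.trans (Nat.lt_succ_self k)))
      (fun i hi => hb i (hi.trans (Nat.lt_succ_self k)))
    funext j
    show max _ 0 = max _ 0
    rw [h1, hA k (Nat.lt_succ_self k), hb k (Nat.lt_succ_self k)]

lemma preact_congr (A₁ A₂ : ∀ i : ℕ, Matrix (Fin (n (i + 1))) (Fin (n i)) ℝ)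
    (b₁ b₂ : ∀ i : ℕ, Fin (n (i + 1)) → ℝ) (x : Fin (n 0) → ℝ) (k : ℕ)
    (hA : ∀ i ≤ k, A₁ i = A₂ i) (hb : ∀ i ≤ k, b₁ i = b₂ i) :
    preact n A₁ b₁ x k = preact n A₂ b₂ x k := by
  unfold preact
  rw [act_congr A₁ A₂ b₁ b₂ x k (fun i hi => hA i hi.le) (fun i hi => hb i hi.le),
    hA k le_rfl, hb k le_rfl]

lemma Mprod_congr (A₁ A₂ : ∀ i : ℕ, Matrix (Fin (n (i + 1))) (Fin (n i)) ℝ) (k : ℕ)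
    (hA : ∀ i < k, A₁ i = A₂ i) : Mprod n A₁ k = Mprod n A₂ k := by
  induction k with
  | zero => rfl
  | succ k ih =>
    show A₁ k * _ = A₂ k * _
    rw [ih (fun i hi => hA i (hi.trans (Nat.lt_succ_self k))), hA k (Nat.lt_succ_self k)]

lemma vsum_congr (A₁ A₂ : ∀ i : ℕ, Matrix (Fin (n (i + 1))) (Fin (n i)) ℝ)
    (b₁ b₂ : ∀ i : ℕ, Fin (n (i + 1)) → ℝ) (k : ℕ)
    (hA : ∀ i < k, A₁ i = A₂ i) (hb : ∀ i < k, b₁ i = b₂ i) :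
    vsum n A₁ b₁ k = vsum n A₂ b₂ k := by
  induction k with
  | zero => rfl
  | succ k ih =>
    show (A₁ k).mulVec _ + b₁ k = (A₂ k).mulVec _ + b₂ k
    rw [ih (fun i hi => hA i (hi.trans (Nat.lt_succ_self k)))
      (fun i hi => hb i (hi.trans (Nat.lt_succ_self k))),
      hA k (Nat.lt_succ_self k), hb k (Nat.lt_succ_self k)]

lemma act_nonneg (A : ∀ i : ℕ, Matrix (Fin (n (i + 1))) (Fin (n i)) ℝ)
    (b : ∀ i : ℕ, Fin (n (i + 1)) → ℝ) (x : Fin (n 0) → ℝ) (k : ℕ) (j : Fin (n (k + 1))) :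
    0 ≤ act n A b x (k + 1) j :=
  le_max_right _ _

lemma act_eq_affine (A : ∀ i : ℕ, Matrix (Fin (n (i + 1))) (Fin (n i)) ℝ)
    (b : ∀ i : ℕ, Fin (n (i + 1)) → ℝ) (x : Fin (n 0) → ℝ) (k : ℕ)
    (hpos : ∀ k' < k, ∀ j, 0 < preact n A b x k' j) :
    act n A b x k = (Mprod n A k).mulVec x + vsum n A b k := by
  induction k with
  | zero =>
    show x = (1 : Matrix (Fin (n 0)) (Fin (n 0)) ℝ).mulVec x + 0
    simp [Matrix.one_mulVec]
  | succ k ih =>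
    funext j
    have hp := hpos k (Nat.lt_succ_self k) j
    have hact : act n A b x (k + 1) j = preact n A b x k j := max_eq_left hp.le
    rw [hact]
    unfold preact
    rw [ih (fun k' h => hpos k' (h.trans (Nat.lt_succ_self k)))]
    rw [Matrix.mulVec_add, Matrix.mulVec_mulVec]
    show ((A k * Mprod n A k).mulVec x) j + ((A k).mulVec (vsum n A b k)) j + b k j = _
    show _ = ((A k * Mprod n A k).mulVec x) j + ((A k).mulVec (vsum n A b k) + b k) j
    simp [add_assoc]

lemma preact_eq_affine (A : ∀ i : ℕ, Matrix (Fin (n (i + 1))) (Fin (n i)) ℝ)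
    (b : ∀ i : ℕ, Fin (n (i + 1)) → ℝ) (x : Fin (n 0) → ℝ) (k : ℕ)
    (hpos : ∀ k' < k, ∀ j, 0 < preact n A b x k' j) :
    preact n A b x k = (Mprod n A (k + 1)).mulVec x + vsum n A b (k + 1) := by
  funext j
  unfold preact
  rw [act_eq_affine A b x k hpos]
  rw [Matrix.mulVec_add, Matrix.mulVec_mulVec]
  show ((A k * Mprod n A k).mulVec x) j + ((A k).mulVec (vsum n A b k)) j + b k j = _
  show _ = ((A k * Mprod n A k).mulVec x) j + ((A k).mulVec (vsum n A b k) + b k) j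
  simp [add_assoc]

lemma rank_Mprod_le (A : ∀ i : ℕ, Matrix (Fin (n (i + 1))) (Fin (n i)) ℝ) (k : ℕ) :
    ∀ j ≤ k, (Mprod n A k).rank ≤ n j := by
  induction k with
  | zero =>
    intro j hj
    interval_cases j
    calc (Mprod n A 0).rank ≤ Fintype.card (Fin (n 0)) := Matrix.rank_le_card_width _
    _ = n 0 := Fintype.card_fin _
  | succ k ih =>
    intro j hj
    rcases Nat.lt_succ_iff_lt_or_eq.mp (Nat.lt_succ_of_le hj) with h | h
    · calc (Mprod n A (k + 1)).rank = (A k * Mprod n A k).rank := rfl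
      _ ≤ (Mprod n A k).rank := Matrix.rank_mul_le_right _ _
      _ ≤ n j := ih j (Nat.lt_succ_iff.mp h)
    · subst h
      calc (Mprod n A (k + 1)).rank ≤ Fintype.card (Fin (n (k + 1))) :=
        Matrix.rank_le_card_height _
      _ = n (k + 1) := Fintype.card_fin _

/-! ### The constructed parameters -/

/-- right factors: `Rfac 0 = V`, `Rfac (k+1) = projection`. -/
noncomputable def Rfac {n : ℕ → ℕ} {s : ℕ} (V : Matrix (Fin s) (Fin (n 0)) ℝ) :
    (k : ℕ) → Matrix (Fin s) (Fin (n k)) ℝ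
  | 0 => V
  | k + 1 => (emb s (n (k + 1)))ᵀ

/-- the constructed weight matrices -/
noncomputable def Wfac (n : ℕ → ℕ) (s K : ℕ) (U : Matrix (Fin (n (K + 1))) (Fin s) ℝ)
    (V : Matrix (Fin s) (Fin (n 0)) ℝ) (k : ℕ) :
    Matrix (Fin (n (k + 1))) (Fin (n k)) ℝ :=
  if h : k = K then
    Matrix.of fun j l =>
      (U * Rfac V K) (Fin.cast (congrArg (fun t => n (t + 1)) h) j)
        (Fin.cast (congrArg n h) l)
  else emb s (n (k + 1)) * Rfac V k

lemma Wfac_K (n : ℕ → ℕ) (s K : ℕ) (U : Matrix (Fin (n (K + 1))) (Fin s) ℝ)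
    (V : Matrix (Fin s) (Fin (n 0)) ℝ) : Wfac n s K U V K = U * Rfac V K := by
  unfold Wfac
  rw [dif_pos rfl]
  rfl

lemma Wfac_ne (n : ℕ → ℕ) (s K : ℕ) (U : Matrix (Fin (n (K + 1))) (Fin s) ℝ)
    (V : Matrix (Fin s) (Fin (n 0)) ℝ) {k : ℕ} (h : k ≠ K) :
    Wfac n s K U V k = emb s (n (k + 1)) * Rfac V k := dif_neg h

noncomputable def AuxM {n : ℕ → ℕ} {s : ℕ} (V : Matrix (Fin s) (Fin (n 0)) ℝ) :
    (k : ℕ) → Matrix (Fin (n k)) (Fin (n 0)) ℝ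
  | 0 => 1
  | k + 1 => emb s (n (k + 1)) * V

lemma Mprod_Wfac_le {n : ℕ → ℕ} {s K : ℕ} (U : Matrix (Fin (n (K + 1))) (Fin s) ℝ)
    (V : Matrix (Fin s) (Fin (n 0)) ℝ) (hs : ∀ i, i ≤ K + 1 → s ≤ n i) :
    ∀ k, k ≤ K → Mprod n (Wfac n s K U V) k = AuxM V k := by
  intro k
  induction k with
  | zero => intro _; rfl
  | succ k ih =>
    intro hk
    have hkK : k ≠ K := by omega
    have h1 : Mprod n (Wfac n s K U V) (k + 1) =
        Wfac n s K U V k * Mprod n (Wfac n s K U V) k := rfl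
    rw [h1, ih (by omega), Wfac_ne n s K U V hkK]
    cases k with
    | zero =>
      show emb s (n 1) * Rfac V 0 * AuxM V 0 = AuxM V 1
      show emb s (n 1) * V * 1 = emb s (n 1) * V
      rw [Matrix.mul_one]
    | succ k =>
      show emb s (n (k + 2)) * (emb s (n (k + 1)))ᵀ * (emb s (n (k + 1)) * V) = _
      rw [Matrix.mul_assoc, ← Matrix.mul_assoc ((emb s (n (k + 1)))ᵀ),
        embT_mul_emb (hs (k + 1) (by omega)), Matrix.one_mul]
      rfl

lemma Mprod_Wfac_top {n : ℕ → ℕ} {s K : ℕ} (U : Matrix (Fin (n (K + 1))) (Fin s) ℝ)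
    (V : Matrix (Fin s) (Fin (n 0)) ℝ) (hs : ∀ i, i ≤ K + 1 → s ≤ n i) :
    Mprod n (Wfac n s K U V) (K + 1) = U * V := by
  have h1 : Mprod n (Wfac n s K U V) (K + 1) =
      Wfac n s K U V K * Mprod n (Wfac n s K U V) K := rfl
  rw [h1, Wfac_K, Mprod_Wfac_le U V hs K le_rfl]
  cases K with
  | zero =>
    show U * V * 1 = U * V
    rw [Matrix.mul_one]
  | succ k =>
    show U * (emb s (n (k + 1)))ᵀ * (emb s (n (k + 1)) * V) = U * V
    rw [Matrix.mul_assoc, ← Matrix.mul_assoc ((emb s (n (k + 1)))ᵀ),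
      embT_mul_emb (hs (k + 1) (by omega)), Matrix.one_mul]

/-- bias magnitude -/
noncomputable def tbound {n : ℕ → ℕ} {s N : ℕ} (V : Matrix (Fin s) (Fin (n 0)) ℝ)
    (x : Fin N → Fin (n 0) → ℝ) : ℝ :=
  1 + ∑ i : Fin N, ∑ a : Fin s, |(V.mulVec (x i)) a|

lemma one_le_tbound {n : ℕ → ℕ} {s N : ℕ} (V : Matrix (Fin s) (Fin (n 0)) ℝ)
    (x : Fin N → Fin (n 0) → ℝ) : 1 ≤ tbound V x := by
  unfold tbound
  have : (0:ℝ) ≤ ∑ i : Fin N, ∑ a : Fin s, |(V.mulVec (x i)) a| := by positivity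
  linarith

/-- constant bias below the top layer -/
noncomputable def cLow (n : ℕ → ℕ) (t : ℝ) : ∀ k : ℕ, Fin (n (k + 1)) → ℝ := fun _ _ => t

/-- the constructed biases -/
noncomputable def cfac (n : ℕ → ℕ) (K : ℕ)
    (W : ∀ i : ℕ, Matrix (Fin (n (i + 1))) (Fin (n i)) ℝ)
    (b' : Fin (n (K + 1)) → ℝ) (t : ℝ) (k : ℕ) : Fin (n (k + 1)) → ℝ :=
  if h : k = K then
    fun j => (b' - (W K).mulVec (vsum n W (cLow n t) K))
      (Fin.cast (congrArg (fun u => n (u + 1)) h) j)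
  else fun _ => t

lemma cfac_K (n : ℕ → ℕ) (K : ℕ) (W : ∀ i : ℕ, Matrix (Fin (n (i + 1))) (Fin (n i)) ℝ)
    (b' : Fin (n (K + 1)) → ℝ) (t : ℝ) :
    cfac n K W b' t K = b' - (W K).mulVec (vsum n W (cLow n t) K) := by
  unfold cfac
  rw [dif_pos rfl]
  rfl

lemma cfac_ne (n : ℕ → ℕ) (K : ℕ) (W : ∀ i : ℕ, Matrix (Fin (n (i + 1))) (Fin (n i)) ℝ)
    (b' : Fin (n (K + 1)) → ℝ) (t : ℝ) {k : ℕ} (h : k ≠ K) :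
    cfac n K W b' t k = fun _ => t := dif_neg h

lemma vsum_cfac_top (n : ℕ → ℕ) (K : ℕ)
    (W : ∀ i : ℕ, Matrix (Fin (n (i + 1))) (Fin (n i)) ℝ)
    (b' : Fin (n (K + 1)) → ℝ) (t : ℝ) :
    vsum n W (cfac n K W b' t) (K + 1) = b' := by
  have h1 : vsum n W (cfac n K W b' t) (K + 1) =
      (W K).mulVec (vsum n W (cfac n K W b' t) K) + cfac n K W b' t K := rfl
  have h2 : vsum n W (cfac n K W b' t) K = vsum n W (cLow n t) K := by
    apply vsum_congr
    · intro i _; rfl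
    · intro i hi
      rw [cfac_ne n K W b' t (Nat.ne_of_lt hi)]
      rfl
  rw [h1, h2, cfac_K]
  abel

lemma preact_pos {n : ℕ → ℕ} {s K N : ℕ} (U : Matrix (Fin (n (K + 1))) (Fin s) ℝ)
    (V : Matrix (Fin s) (Fin (n 0)) ℝ) (x : Fin N → Fin (n 0) → ℝ)
    (b' : Fin (n (K + 1)) → ℝ) (i : Fin N) :
    ∀ k < K, ∀ j, 0 < preact n (Wfac n s K U V)
      (cfac n K (Wfac n s K U V) b' (tbound V x)) (x i) k j := by
  intro k hk j
  set t := tbound V x with ht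
  have ht1 : 1 ≤ t := one_le_tbound V x
  have hc : cfac n K (Wfac n s K U V) b' t k j = t := by
    rw [cfac_ne n K (Wfac n s K U V) b' t (Nat.ne_of_lt hk)]
  have hpre : preact n (Wfac n s K U V) (cfac n K (Wfac n s K U V) b' t) (x i) k j =
      (Wfac n s K U V k).mulVec
        (act n (Wfac n s K U V) (cfac n K (Wfac n s K U V) b' t) (x i) k) j + t := by
    unfold preact; rw [hc]
  rw [hpre, Wfac_ne n s K U V (Nat.ne_of_lt hk)]
  cases k with
  | zero =>
    have hact : act n (Wfac n s K U V) (cfac n K (Wfac n s K U V) b' t) (x i) 0 = x i := rfl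
    rw [hact]
    have hmv : (emb s (n 1) * Rfac V 0).mulVec (x i) =
        (emb s (n 1)).mulVec (V.mulVec (x i)) := by
      show (emb s (n 1) * V).mulVec (x i) = _
      rw [← Matrix.mulVec_mulVec]
    rw [hmv]
    have habs : |(emb s (n 1)).mulVec (V.mulVec (x i)) j| ≤
        ∑ a : Fin s, |(V.mulVec (x i)) a| := by
      unfold Matrix.mulVec dotProduct
      calc |∑ a : Fin s, emb s (n 1) j a * (V.mulVec (x i)) a|
          ≤ ∑ a : Fin s, |emb s (n 1) j a * (V.mulVec (x i)) a| :=
            Finset.abs_sum_le_sum_abs _ _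
        _ ≤ ∑ a : Fin s, |(V.mulVec (x i)) a| := by
            apply Finset.sum_le_sum
            intro a _
            rw [abs_mul]
            calc |emb s (n 1) j a| * |(V.mulVec (x i)) a|
                ≤ 1 * |(V.mulVec (x i)) a| :=
                  mul_le_mul_of_nonneg_right (emb_abs_le s (n 1) j a) (abs_nonneg _)
              _ = _ := one_mul _
    have hsum : ∑ a : Fin s, |(V.mulVec (x i)) a| ≤ t - 1 := by
      rw [ht]; unfold tbound
      have := Finset.single_le_sum
        (f := fun i' : Fin N => ∑ a : Fin s, |(V.mulVec (x i')) a|)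
        (fun i' _ => by positivity) (Finset.mem_univ i)
      linarith
    have := neg_abs_le ((emb s (n 1)).mulVec (V.mulVec (x i)) j)
    linarith
  | succ k =>
    have hnn : 0 ≤ (emb s (n (k + 2)) * Rfac V (k + 1)).mulVec
        (act n (Wfac n s K U V) (cfac n K (Wfac n s K U V) b' t) (x i) (k + 1)) j := by
      unfold Matrix.mulVec dotProduct
      apply Finset.sum_nonneg
      intro l _
      apply mul_nonneg
      · show 0 ≤ (emb s (n (k + 2)) * (emb s (n (k + 1)))ᵀ) j l
        rw [Matrix.mul_apply]
        apply Finset.sum_nonneg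
        intro a _
        exact mul_nonneg (emb_nonneg _ _ _ _) (emb_nonneg _ _ _ _)
      · exact act_nonneg _ _ _ k l
    linarith

/-! ### Topology on the truncated parameter space -/

/-- parameter space of the first `K+1` layers -/
abbrev PSpace (n : ℕ → ℕ) (K : ℕ) :=
  (∀ k : Fin (K + 1), Fin (n (k + 1)) → Fin (n k) → ℝ) ×
  (∀ k : Fin (K + 1), Fin (n (k + 1)) → ℝ)

noncomputable def pextA {n : ℕ → ℕ} {K : ℕ} (e : PSpace n K) (i : ℕ) :
    Matrix (Fin (n (i + 1))) (Fin (n i)) ℝ :=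
  if h : i < K + 1 then Matrix.of (e.1 ⟨i, h⟩) else 0

noncomputable def pextb {n : ℕ → ℕ} {K : ℕ} (e : PSpace n K) (i : ℕ) :
    Fin (n (i + 1)) → ℝ :=
  if h : i < K + 1 then e.2 ⟨i, h⟩ else 0

lemma cont_pextA {n : ℕ → ℕ} {K : ℕ} (i : ℕ) (j : Fin (n (i + 1))) (l : Fin (n i)) :
    Continuous fun e : PSpace n K => pextA e i j l := by
  unfold pextA
  by_cases h : i < K + 1
  · simp only [dif_pos h]
    exact (continuous_apply l).comp ((continuous_apply j).comp
      ((continuous_apply (⟨i, h⟩ : Fin (K + 1))).comp continuous_fst))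
  · simp only [dif_neg h]
    exact continuous_const

lemma cont_pextb {n : ℕ → ℕ} {K : ℕ} (i : ℕ) (j : Fin (n (i + 1))) :
    Continuous fun e : PSpace n K => pextb e i j := by
  unfold pextb
  by_cases h : i < K + 1
  · simp only [dif_pos h]
    exact (continuous_apply j).comp
      ((continuous_apply (⟨i, h⟩ : Fin (K + 1))).comp continuous_snd)
  · simp only [dif_neg h]
    exact continuous_const

lemma cont_act {n : ℕ → ℕ} {K : ℕ} (x : Fin (n 0) → ℝ) (k : ℕ) (j : Fin (n k)) :
    Continuous fun e : PSpace n K => act n (pextA e) (pextb e) x k j := by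
  induction k with
  | zero => exact continuous_const
  | succ k ih =>
    have heq : (fun e : PSpace n K => act n (pextA e) (pextb e) x (k + 1) j) =
        fun e => max ((∑ l, pextA e k j l * act n (pextA e) (pextb e) x k l)
          + pextb e k j) 0 := rfl
    rw [heq]
    exact Continuous.max (Continuous.add
      (continuous_finset_sum _ fun l _ => (cont_pextA k j l).mul (ih l))
      (cont_pextb k j)) continuous_const

lemma cont_preact {n : ℕ → ℕ} {K : ℕ} (x : Fin (n 0) → ℝ) (k : ℕ) (j : Fin (n (k + 1))) :
    Continuous fun e : PSpace n K => preact n (pextA e) (pextb e) x k j := by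
  have heq : (fun e : PSpace n K => preact n (pextA e) (pextb e) x k j) =
      fun e => (∑ l, pextA e k j l * act n (pextA e) (pextb e) x k l) + pextb e k j := rfl
  rw [heq]
  exact Continuous.add
    (continuous_finset_sum _ fun l _ => (cont_pextA k j l).mul (cont_act x k l))
    (cont_pextb k j)

lemma cont_Mprod {n : ℕ → ℕ} {K : ℕ} (k : ℕ) (j : Fin (n k)) (l : Fin (n 0)) :
    Continuous fun e : PSpace n K => Mprod n (pextA e) k j l := by
  induction k with
  | zero => exact continuous_const
  | succ k ih =>
    have heq : (fun e : PSpace n K => Mprod n (pextA e) (k + 1) j l) =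
        fun e => ∑ a, pextA e k j a * Mprod n (pextA e) k a l := rfl
    rw [heq]
    exact continuous_finset_sum _ fun a _ => (cont_pextA k j a).mul (ih a)

lemma cont_vsum {n : ℕ → ℕ} {K : ℕ} (k : ℕ) (j : Fin (n k)) :
    Continuous fun e : PSpace n K => vsum n (pextA e) (pextb e) k j := by
  induction k with
  | zero => exact continuous_const
  | succ k ih =>
    have heq : (fun e : PSpace n K => vsum n (pextA e) (pextb e) (k + 1) j) =
        fun e => (∑ a, pextA e k j a * vsum n (pextA e) (pextb e) k a) + pextb e k j := rfl
    rw [heq]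
    exact Continuous.add
      (continuous_finset_sum _ fun a _ => (cont_pextA k j a).mul (ih a)) (cont_pextb k j)

lemma exists_good_ball {n : ℕ → ℕ} {K N : ℕ} (x : Fin N → Fin (n 0) → ℝ)
    (A' : Matrix (Fin (n (K + 1))) (Fin (n 0)) ℝ) (b' : Fin (n (K + 1)) → ℝ)
    {ε : ℝ} (hε : 0 < ε) (e₀ : PSpace n K)
    (hpos₀ : ∀ i : Fin N, ∀ k < K, ∀ j, 0 < preact n (pextA e₀) (pextb e₀) (x i) k j)
    (hnorm₀ : matNorm (Mprod n (pextA e₀) (K + 1) - A') +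
      vecNorm (vsum n (pextA e₀) (pextb e₀) (K + 1) - b') < ε) :
    ∃ δ > 0, ∀ e : PSpace n K, dist e e₀ < δ →
      ((∀ i : Fin N, ∀ k < K, ∀ j, 0 < preact n (pextA e) (pextb e) (x i) k j) ∧
       matNorm (Mprod n (pextA e) (K + 1) - A') +
         vecNorm (vsum n (pextA e) (pextb e) (K + 1) - b') < ε) := by
  set S : Set (PSpace n K) :=
    {e | ∀ i : Fin N, ∀ k : Fin K, ∀ j : Fin (n ((k : ℕ) + 1)),
      0 < preact n (pextA e) (pextb e) (x i) (k : ℕ) j} ∩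
    {e | matNorm (Mprod n (pextA e) (K + 1) - A') +
      vecNorm (vsum n (pextA e) (pextb e) (K + 1) - b') < ε} with hS_def
  have hopen1 : IsOpen {e : PSpace n K | ∀ i : Fin N, ∀ k : Fin K,
      ∀ j : Fin (n ((k : ℕ) + 1)), 0 < preact n (pextA e) (pextb e) (x i) (k : ℕ) j} := by
    have heq : {e : PSpace n K | ∀ i : Fin N, ∀ k : Fin K,
        ∀ j : Fin (n ((k : ℕ) + 1)), 0 < preact n (pextA e) (pextb e) (x i) (k : ℕ) j} =
        ⋂ i : Fin N, ⋂ k : Fin K, ⋂ j : Fin (n ((k : ℕ) + 1)),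
          {e : PSpace n K | 0 < preact n (pextA e) (pextb e) (x i) (k : ℕ) j} := by
      ext e; simp [Set.mem_iInter, Set.mem_setOf_eq]
    rw [heq]
    exact isOpen_iInter_of_finite fun i => isOpen_iInter_of_finite fun k =>
      isOpen_iInter_of_finite fun j =>
        isOpen_lt continuous_const (cont_preact (x i) (k : ℕ) j)
  have hcont : Continuous fun e : PSpace n K =>
      matNorm (Mprod n (pextA e) (K + 1) - A') +
        vecNorm (vsum n (pextA e) (pextb e) (K + 1) - b') := by
    apply Continuous.add
    · have heq : (fun e : PSpace n K => matNorm (Mprod n (pextA e) (K + 1) - A')) =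
          fun e => Real.sqrt (∑ j, ∑ l, (Mprod n (pextA e) (K + 1) j l - A' j l) ^ 2) := rfl
      rw [heq]
      exact Real.continuous_sqrt.comp (continuous_finset_sum _ fun j _ =>
        continuous_finset_sum _ fun l _ =>
          ((cont_Mprod (K + 1) j l).sub continuous_const).pow 2)
    · have heq : (fun e : PSpace n K =>
          vecNorm (vsum n (pextA e) (pextb e) (K + 1) - b')) =
          fun e => Real.sqrt (∑ j, (vsum n (pextA e) (pextb e) (K + 1) j - b' j) ^ 2) := rfl
      rw [heq]
      exact Real.continuous_sqrt.comp (continuous_finset_sum _ fun j _ =>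
        ((cont_vsum (K + 1) j).sub continuous_const).pow 2)
  have hS : IsOpen S := hopen1.inter (isOpen_lt hcont continuous_const)
  have he₀ : e₀ ∈ S := ⟨fun i k j => hpos₀ i (k : ℕ) k.2 j, hnorm₀⟩
  obtain ⟨δ, hδ, hball⟩ := Metric.isOpen_iff.mp hS e₀ he₀
  refine ⟨δ, hδ, fun e he => ?_⟩
  have hmem := hball (Metric.mem_ball.mpr he)
  exact ⟨fun i k hk j => hmem.1 i ⟨k, hk⟩ j, hmem.2⟩

/-! ### paramDist controls the product-space distance -/

lemma abs_le_paramDist_A (n : ℕ → ℕ) (K : ℕ)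
    (W W' : ∀ i : ℕ, Matrix (Fin (n (i + 1))) (Fin (n i)) ℝ)
    (c c' : ∀ i : ℕ, Fin (n (i + 1)) → ℝ) {i : ℕ} (hi : i < K + 1)
    (j : Fin (n (i + 1))) (l : Fin (n i)) :
    |W i j l - W' i j l| ≤ paramDist n K W W' c c' := by
  rw [← Real.sqrt_sq_eq_abs]
  unfold paramDist
  apply Real.sqrt_le_sqrt
  calc (W i j l - W' i j l) ^ 2
      ≤ ∑ l', (W i j l' - W' i j l') ^ 2 :=
        Finset.single_le_sum (f := fun l' => (W i j l' - W' i j l') ^ 2)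
          (fun _ _ => sq_nonneg _) (Finset.mem_univ l)
    _ ≤ ∑ j', ∑ l', (W i j' l' - W' i j' l') ^ 2 :=
        Finset.single_le_sum (f := fun j' => ∑ l', (W i j' l' - W' i j' l') ^ 2)
          (fun _ _ => by positivity) (Finset.mem_univ j)
    _ ≤ (∑ j', ∑ l', (W i j' l' - W' i j' l') ^ 2) + ∑ j', (c i j' - c' i j') ^ 2 :=
        le_add_of_nonneg_right (by positivity)
    _ ≤ ∑ i' ∈ Finset.range (K + 1),
          ((∑ j', ∑ l', (W i' j' l' - W' i' j' l') ^ 2) + ∑ j', (c i' j' - c' i' j') ^ 2) :=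
        Finset.single_le_sum
          (f := fun i' => (∑ j', ∑ l', (W i' j' l' - W' i' j' l') ^ 2) +
            ∑ j', (c i' j' - c' i' j') ^ 2)
          (fun _ _ => by positivity) (Finset.mem_range.mpr hi)

lemma abs_le_paramDist_b (n : ℕ → ℕ) (K : ℕ)
    (W W' : ∀ i : ℕ, Matrix (Fin (n (i + 1))) (Fin (n i)) ℝ)
    (c c' : ∀ i : ℕ, Fin (n (i + 1)) → ℝ) {i : ℕ} (hi : i < K + 1)
    (j : Fin (n (i + 1))) :
    |c i j - c' i j| ≤ paramDist n K W W' c c' := by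
  rw [← Real.sqrt_sq_eq_abs]
  unfold paramDist
  apply Real.sqrt_le_sqrt
  calc (c i j - c' i j) ^ 2
      ≤ ∑ j', (c i j' - c' i j') ^ 2 :=
        Finset.single_le_sum (f := fun j' => (c i j' - c' i j') ^ 2)
          (fun _ _ => sq_nonneg _) (Finset.mem_univ j)
    _ ≤ (∑ j', ∑ l', (W i j' l' - W' i j' l') ^ 2) + ∑ j', (c i j' - c' i j') ^ 2 :=
        le_add_of_nonneg_left (by positivity)
    _ ≤ ∑ i' ∈ Finset.range (K + 1),
          ((∑ j', ∑ l', (W i' j' l' - W' i' j' l') ^ 2) + ∑ j', (c i' j' - c' i' j') ^ 2) :=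
        Finset.single_le_sum
          (f := fun i' => (∑ j', ∑ l', (W i' j' l' - W' i' j' l') ^ 2) +
            ∑ j', (c i' j' - c' i' j') ^ 2)
          (fun _ _ => by positivity) (Finset.mem_range.mpr hi)

lemma dist_le_paramDist (n : ℕ → ℕ) (K : ℕ)
    (W W' : ∀ i : ℕ, Matrix (Fin (n (i + 1))) (Fin (n i)) ℝ)
    (c c' : ∀ i : ℕ, Fin (n (i + 1)) → ℝ) :
    dist ((fun k : Fin (K + 1) => fun j l => W' (k : ℕ) j l,
           fun k : Fin (K + 1) => fun j => c' (k : ℕ) j) : PSpace n K)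
         ((fun k : Fin (K + 1) => fun j l => W (k : ℕ) j l,
           fun k : Fin (K + 1) => fun j => c (k : ℕ) j) : PSpace n K) ≤
      paramDist n K W W' c c' := by
  have hpd : 0 ≤ paramDist n K W W' c c' := Real.sqrt_nonneg _
  rw [Prod.dist_eq]
  apply max_le
  · rw [dist_pi_le_iff hpd]
    intro k
    rw [dist_pi_le_iff hpd]
    intro j
    rw [dist_pi_le_iff hpd]
    intro l
    rw [Real.dist_eq, abs_sub_comm]
    exact abs_le_paramDist_A n K W W' c c' k.2 j l
  · rw [dist_pi_le_iff hpd]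
    intro k
    rw [dist_pi_le_iff hpd]
    intro j
    rw [Real.dist_eq, abs_sub_comm]
    exact abs_le_paramDist_b n K W W' c c' k.2 j

end MLPAux

/-- If `(A', b')` is a local minimum of the affine training objective
`L_aff(A, b) = ℓ(A x_1 + b, …, A x_N + b)` subject to the rank constraint
`rank A ≤ s = min_{0 ≤ i ≤ K+1} n i`, then there are MLP parameters `(W, c)` that form
an unconstrained local minimum of `L_MLP` and reproduce `A' x_i + b'` on the training set. -/
theorem affine_local_min_gives_mlp_local_min (n : ℕ → ℕ) (K N : ℕ)
    (x : Fin N → Fin (n 0) → ℝ)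
    (ℓ : (Fin N → Fin (n (K + 1)) → ℝ) → ℝ) (hℓ : Continuous ℓ)
    (A' : Matrix (Fin (n (K + 1))) (Fin (n 0)) ℝ) (b' : Fin (n (K + 1)) → ℝ)
    (hrank : A'.rank ≤ (Finset.range (K + 2)).inf' (by simp) n)
    (hmin : ∃ ε > 0, ∀ (A : Matrix (Fin (n (K + 1))) (Fin (n 0)) ℝ)
        (b : Fin (n (K + 1)) → ℝ),
        A.rank ≤ (Finset.range (K + 2)).inf' (by simp) n →
        matNorm (A - A') + vecNorm (b - b') < ε →
        ℓ (fun i => A'.mulVec (x i) + b') ≤ ℓ (fun i => A.mulVec (x i) + b)) :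
    ∃ (W : ∀ i : ℕ, Matrix (Fin (n (i + 1))) (Fin (n i)) ℝ)
      (c : ∀ i : ℕ, Fin (n (i + 1)) → ℝ),
      (∀ i, mlp n W c K (x i) = A'.mulVec (x i) + b') ∧
      ∃ δ > 0, ∀ (W' : ∀ i : ℕ, Matrix (Fin (n (i + 1))) (Fin (n i)) ℝ)
        (c' : ∀ i : ℕ, Fin (n (i + 1)) → ℝ),
        paramDist n K W W' c c' < δ →
        ℓ (fun i => mlp n W c K (x i)) ≤ ℓ (fun i => mlp n W' c' K (x i)) := by
  classical
  obtain ⟨ε, hε, hmin⟩ := hmin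
  set s := (Finset.range (K + 2)).inf' (by simp) n with hs_def
  have hs : ∀ i, i ≤ K + 1 → s ≤ n i := fun i hi =>
    Finset.inf'_le n (Finset.mem_range.mpr (by omega))
  obtain ⟨U, V, hUV⟩ := MLPAux.exists_rank_factorization A' hrank
  set t := MLPAux.tbound V x with ht_def
  set W := MLPAux.Wfac n s K U V with hW_def
  set c := MLPAux.cfac n K W b' t with hc_def
  have hpos : ∀ i : Fin N, ∀ k < K, ∀ j, 0 < preact n W c (x i) k j :=
    fun i => MLPAux.preact_pos U V x b' i
  have hM : MLPAux.Mprod n W (K + 1) = A' := by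
    rw [hW_def, MLPAux.Mprod_Wfac_top U V hs, hUV]
  have hv : MLPAux.vsum n W c (K + 1) = b' := MLPAux.vsum_cfac_top n K W b' t
  have hmlp : ∀ i, mlp n W c K (x i) = A'.mulVec (x i) + b' := by
    intro i
    show preact n W c (x i) K = _
    rw [MLPAux.preact_eq_affine W c (x i) K (hpos i), hM, hv]
  refine ⟨W, c, hmlp, ?_⟩
  set e₀ : MLPAux.PSpace n K :=
    (fun k => fun j l => W (k : ℕ) j l, fun k => fun j => c (k : ℕ) j) with he₀_def
  have hAa : ∀ i, i < K + 1 → MLPAux.pextA e₀ i = W i := by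
    intro i hi
    unfold MLPAux.pextA
    rw [dif_pos hi]
    rfl
  have hba : ∀ i, i < K + 1 → MLPAux.pextb e₀ i = c i := by
    intro i hi
    unfold MLPAux.pextb
    rw [dif_pos hi]
  have hpos₀ : ∀ i : Fin N, ∀ k < K, ∀ j,
      0 < preact n (MLPAux.pextA e₀) (MLPAux.pextb e₀) (x i) k j := by
    intro i k hk j
    rw [MLPAux.preact_congr (MLPAux.pextA e₀) W (MLPAux.pextb e₀) c (x i) k
      (fun i' hi' => hAa i' (by omega)) (fun i' hi' => hba i' (by omega))]
    exact hpos i k hk j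
  have hM₀ : MLPAux.Mprod n (MLPAux.pextA e₀) (K + 1) = A' := by
    rw [MLPAux.Mprod_congr (MLPAux.pextA e₀) W (K + 1) (fun i' hi' => hAa i' hi'), hM]
  have hv₀ : MLPAux.vsum n (MLPAux.pextA e₀) (MLPAux.pextb e₀) (K + 1) = b' := by
    rw [MLPAux.vsum_congr (MLPAux.pextA e₀) W (MLPAux.pextb e₀) c (K + 1)
      (fun i' hi' => hAa i' hi') (fun i' hi' => hba i' hi'), hv]
  have hnorm₀ : matNorm (MLPAux.Mprod n (MLPAux.pextA e₀) (K + 1) - A') +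
      vecNorm (MLPAux.vsum n (MLPAux.pextA e₀) (MLPAux.pextb e₀) (K + 1) - b') < ε := by
    rw [hM₀, hv₀]
    simp [matNorm, vecNorm, sub_self]
    exact hε
  obtain ⟨δ, hδ, hball⟩ := MLPAux.exists_good_ball x A' b' hε e₀ hpos₀ hnorm₀
  refine ⟨δ, hδ, ?_⟩
  intro W' c' hdist
  set e' : MLPAux.PSpace n K :=
    (fun k => fun j l => W' (k : ℕ) j l, fun k => fun j => c' (k : ℕ) j) with he'_def
  have hde : dist e' e₀ < δ :=
    lt_of_le_of_lt (MLPAux.dist_le_paramDist n K W W' c c') hdist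
  obtain ⟨hpos', hnorm'⟩ := hball e' hde
  have hA'a : ∀ i, i < K + 1 → MLPAux.pextA e' i = W' i := by
    intro i hi
    unfold MLPAux.pextA
    rw [dif_pos hi]
    rfl
  have hb'a : ∀ i, i < K + 1 → MLPAux.pextb e' i = c' i := by
    intro i hi
    unfold MLPAux.pextb
    rw [dif_pos hi]
  have hpos'' : ∀ i : Fin N, ∀ k < K, ∀ j, 0 < preact n W' c' (x i) k j := by
    intro i k hk j
    rw [← MLPAux.preact_congr (MLPAux.pextA e') W' (MLPAux.pextb e') c' (x i) k
      (fun i' hi' => hA'a i' (by omega)) (fun i' hi' => hb'a i' (by omega))]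
    exact hpos' i k hk j
  have hMM : MLPAux.Mprod n (MLPAux.pextA e') (K + 1) = MLPAux.Mprod n W' (K + 1) :=
    MLPAux.Mprod_congr (MLPAux.pextA e') W' (K + 1) (fun i' hi' => hA'a i' hi')
  have hvv : MLPAux.vsum n (MLPAux.pextA e') (MLPAux.pextb e') (K + 1) =
      MLPAux.vsum n W' c' (K + 1) :=
    MLPAux.vsum_congr (MLPAux.pextA e') W' (MLPAux.pextb e') c' (K + 1)
      (fun i' hi' => hA'a i' hi') (fun i' hi' => hb'a i' hi')
  rw [hMM, hvv] at hnorm'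
  have hmlp' : ∀ i, mlp n W' c' K (x i) =
      (MLPAux.Mprod n W' (K + 1)).mulVec (x i) + MLPAux.vsum n W' c' (K + 1) := by
    intro i
    show preact n W' c' (x i) K = _
    rw [MLPAux.preact_eq_affine W' c' (x i) K (hpos'' i)]
  have hrank' : (MLPAux.Mprod n W' (K + 1)).rank ≤ s := by
    rw [hs_def]
    apply Finset.le_inf'
    intro i hi
    exact MLPAux.rank_Mprod_le W' (K + 1) i (by
      have := Finset.mem_range.mp hi; omega)
  have hkey := hmin (MLPAux.Mprod n W' (K + 1)) (MLPAux.vsum n W' c' (K + 1)) hrank' hnorm'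
  have h1 : (fun i => mlp n W c K (x i)) = fun i => A'.mulVec (x i) + b' := funext hmlp
  have h2 : (fun i => mlp n W' c' K (x i)) = fun i =>
      (MLPAux.Mprod n W' (K + 1)).mulVec (x i) + MLPAux.vsum n W' c' (K + 1) := funext hmlp'
  rw [h1, h2]
  exact hkey
end

section
/- Consider a training set {(x_i, y_i)}_{i=1}^N with x_i ∈ ℝ^m, a family of L-layer ReLU MLPs F_φ : ℝ^m → ℝ^n with layer widths n_0 = m, n_1, …, n_L = n, s = min_{0 ≤ i ≤ L} n_i, a continuous ℓ : (ℝ^n)^N → ℝ, L_aff(A, b) = ℓ(A x_1 + b, …, A x_N + b), and L_MLP(φ) = ℓ(F_φ(x_1), …, F_φ(x_N)). Suppose (A', b') with rank(A') ≤ s is a local minimum of L_aff subject to rank(A) ≤ s, and suppose moreover that L_aff(A', b') > inf_φ L_MLP(φ). Then L_MLP possesses a suboptimal local minimum: there exists φ' that is a local minimum of L_MLP with L_MLP(φ') = L_aff(A', b') strictly greater than the infimum of L_MLP, hence φ' is a local but not global minimum. -/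
open Matrix

noncomputable def effA (n : ℕ → ℕ)
    (A : ∀ i : ℕ, Matrix (Fin (n (i + 1))) (Fin (n i)) ℝ) :
    (k : ℕ) → Matrix (Fin (n (k + 1))) (Fin (n 0)) ℝ
  | 0 => A 0
  | k + 1 => A (k + 1) * effA n A k

noncomputable def effB (n : ℕ → ℕ)
    (A : ∀ i : ℕ, Matrix (Fin (n (i + 1))) (Fin (n i)) ℝ)
    (b : ∀ i : ℕ, Fin (n (i + 1)) → ℝ) : (k : ℕ) → Fin (n (k + 1)) → ℝ
  | 0 => b 0
  | k + 1 => (A (k + 1)).mulVec (effB n A b k) + b (k + 1)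

theorem preact_eq_affine (n : ℕ → ℕ)
    (A : ∀ i : ℕ, Matrix (Fin (n (i + 1))) (Fin (n i)) ℝ)
    (b : ∀ i : ℕ, Fin (n (i + 1)) → ℝ) (x : Fin (n 0) → ℝ) (k : ℕ)
    (h : ∀ k' < k, ∀ j, 0 ≤ preact n A b x k' j) :
    preact n A b x k = fun j => (effA n A k).mulVec x j + effB n A b k j := by
  induction k with
  | zero => rfl
  | succ k ih =>
    have hact : act n A b x (k + 1) = (effA n A k).mulVec x + effB n A b k := by
      funext j
      have h1 : act n A b x (k + 1) j = max (preact n A b x k j) 0 := rfl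
      rw [h1, max_eq_left (h k (Nat.lt_succ_self k) j),
        ih (fun k' hk' j => h k' (hk'.trans (Nat.lt_succ_self k)) j)]
      rfl
    funext j
    show (A (k + 1)).mulVec (act n A b x (k + 1)) j + b (k + 1) j = _
    rw [hact, Matrix.mulVec_add, Matrix.mulVec_mulVec]
    show _ = (A (k + 1) * effA n A k).mulVec x j + ((A (k + 1)).mulVec (effB n A b k) + b (k + 1)) j
    simp [Pi.add_apply]
    ring

theorem act_congr (n : ℕ → ℕ) (A A2 : ∀ i : ℕ, Matrix (Fin (n (i + 1))) (Fin (n i)) ℝ)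
    (b b2 : ∀ i : ℕ, Fin (n (i + 1)) → ℝ) (x : Fin (n 0) → ℝ) (k : ℕ)
    (hA : ∀ i < k, A i = A2 i) (hb : ∀ i < k, b i = b2 i) :
    act n A b x k = act n A2 b2 x k := by
  induction k with
  | zero => rfl
  | succ k ih =>
    funext j
    show max ((A k).mulVec (act n A b x k) j + b k j) 0 = _
    rw [ih (fun i hi => hA i (hi.trans (Nat.lt_succ_self k)))
      (fun i hi => hb i (hi.trans (Nat.lt_succ_self k))),
      hA k (Nat.lt_succ_self k), hb k (Nat.lt_succ_self k)]
    rfl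

theorem preact_congr (n : ℕ → ℕ) (A A2 : ∀ i : ℕ, Matrix (Fin (n (i + 1))) (Fin (n i)) ℝ)
    (b b2 : ∀ i : ℕ, Fin (n (i + 1)) → ℝ) (x : Fin (n 0) → ℝ) (k : ℕ)
    (hA : ∀ i ≤ k, A i = A2 i) (hb : ∀ i ≤ k, b i = b2 i) :
    preact n A b x k = preact n A2 b2 x k := by
  unfold preact
  rw [act_congr n A A2 b b2 x k (fun i hi => hA i hi.le) (fun i hi => hb i hi.le),
    hA k le_rfl, hb k le_rfl]

theorem effA_congr (n : ℕ → ℕ) (A A2 : ∀ i : ℕ, Matrix (Fin (n (i + 1))) (Fin (n i)) ℝ)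
    (k : ℕ) (hA : ∀ i ≤ k, A i = A2 i) : effA n A k = effA n A2 k := by
  induction k with
  | zero => exact hA 0 le_rfl
  | succ k ih =>
    show A (k + 1) * effA n A k = A2 (k + 1) * effA n A2 k
    rw [hA (k + 1) le_rfl, ih (fun i hi => hA i (hi.trans (Nat.le_succ k)))]

theorem effB_congr (n : ℕ → ℕ) (A A2 : ∀ i : ℕ, Matrix (Fin (n (i + 1))) (Fin (n i)) ℝ)
    (b b2 : ∀ i : ℕ, Fin (n (i + 1)) → ℝ) (k : ℕ)
    (hA : ∀ i ≤ k, A i = A2 i) (hb : ∀ i ≤ k, b i = b2 i) :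
    effB n A b k = effB n A2 b2 k := by
  induction k with
  | zero => exact hb 0 le_rfl
  | succ k ih =>
    show (A (k + 1)).mulVec (effB n A b k) + b (k + 1) = _
    rw [hA (k + 1) le_rfl, hb (k + 1) le_rfl,
      ih (fun i hi => hA i (hi.trans (Nat.le_succ k))) (fun i hi => hb i (hi.trans (Nat.le_succ k)))]
    rfl

theorem rank_effA_le (n : ℕ → ℕ) (A : ∀ i : ℕ, Matrix (Fin (n (i + 1))) (Fin (n i)) ℝ) :
    ∀ k : ℕ, ∀ j ≤ k, (effA n A k).rank ≤ (effA n A j).rank := by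
  intro k
  induction k with
  | zero => intro j hj; interval_cases j; exact le_rfl
  | succ k ih =>
    intro j hj
    rcases Nat.eq_or_lt_of_le hj with rfl | h
    · exact le_rfl
    · exact le_trans (Matrix.rank_mul_le_right _ _) (ih j (Nat.lt_succ_iff.1 h))

theorem matrix_fac {p q : ℕ} (M : Matrix (Fin p) (Fin q) ℝ) :
    ∃ (B : Matrix (Fin p) (Fin M.rank) ℝ) (C : Matrix (Fin M.rank) (Fin q) ℝ), M = B * C := by
  set V := LinearMap.range M.mulVecLin with hV
  have hfin : Module.finrank ℝ V = M.rank := rfl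
  let bas : Module.Basis (Fin M.rank) ℝ V := Module.finBasisOfFinrankEq ℝ V hfin
  refine ⟨Matrix.of fun j t => (bas t : Fin p → ℝ) j,
    Matrix.of fun t k => bas.repr ⟨M.mulVec (Pi.single k 1), LinearMap.mem_range_self _ _⟩ t, ?_⟩
  ext j k
  rw [Matrix.mul_apply]
  simp only [Matrix.of_apply]
  set v : V := ⟨M.mulVec (Pi.single k 1), LinearMap.mem_range_self _ _⟩ with hv
  have h1 := bas.sum_repr v
  have h2 := congrArg (fun w : V => (w : Fin p → ℝ) j) h1
  simp only [AddSubmonoidClass.coe_finset_sum, Finset.sum_apply, SetLike.val_smul, Pi.smul_apply,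
    smul_eq_mul] at h2
  rw [Finset.sum_congr rfl (fun t _ => mul_comm ((bas t : Fin p → ℝ) j) _)] at *
  rw [h2]
  simp [hv, Matrix.mulVec_single]

noncomputable def Wctr (n : ℕ → ℕ) (K r : ℕ) (B : Matrix (Fin (n (K + 1))) (Fin r) ℝ)
    (C : Matrix (Fin r) (Fin (n 0)) ℝ) : ∀ i : ℕ, Matrix (Fin (n (i + 1))) (Fin (n i)) ℝ :=
  fun i => Matrix.of fun j k =>
    if hi : i = 0 then (if hj : (j : ℕ) < r then C ⟨(j : ℕ), hj⟩ (Fin.cast (by rw [hi]) k) else 0)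
    else if hiK : i = K then
      (if hk : (k : ℕ) < r then B (Fin.cast (by rw [hiK]) j) ⟨(k : ℕ), hk⟩ else 0)
    else if (j : ℕ) = (k : ℕ) ∧ (j : ℕ) < r then 1 else 0

noncomputable def cctr (n : ℕ → ℕ) (K : ℕ) (b' : Fin (n (K + 1)) → ℝ) (t0 : ℝ)
    (W : ∀ i : ℕ, Matrix (Fin (n (i + 1))) (Fin (n i)) ℝ) : ∀ i : ℕ, Fin (n (i + 1)) → ℝ :=
  fun i j =>
    if i = 0 then t0
    else if hiK : i = K then b' (Fin.cast (by rw [hiK]) j) - (W i).mulVec (fun _ => t0) j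
    else t0 - (W i).mulVec (fun _ => t0) j

theorem effA_Wctr (n : ℕ → ℕ) (K r : ℕ) (B : Matrix (Fin (n (K + 1))) (Fin r) ℝ)
    (C : Matrix (Fin r) (Fin (n 0)) ℝ) (hr : ∀ i ≤ K + 1, r ≤ n i) :
    ∀ k < K, ∀ (j : Fin (n (k + 1))) (l : Fin (n 0)),
      effA n (Wctr n K r B C) k j l = if hj : (j : ℕ) < r then C ⟨(j : ℕ), hj⟩ l else 0 := by
  intro k
  induction k with
  | zero =>
    intro _ j l
    show Wctr n K r B C 0 j l = _
    simp only [Wctr, Matrix.of_apply]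
    rw [dif_pos trivial]
    rfl
  | succ k ih =>
    intro hk j l
    have hk' : k < K := (Nat.lt_succ_self k).trans hk
    show (Wctr n K r B C (k + 1) * effA n (Wctr n K r B C) k) j l = _
    rw [Matrix.mul_apply]
    have hW : ∀ t : Fin (n (k + 1)), Wctr n K r B C (k + 1) j t =
        if (j : ℕ) = (t : ℕ) ∧ (j : ℕ) < r then 1 else 0 := by
      intro t
      simp only [Wctr, Matrix.of_apply, dif_neg (Nat.succ_ne_zero k), dif_neg (Nat.ne_of_lt hk)]
    by_cases hj : (j : ℕ) < r
    · rw [dif_pos hj]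
      have hjn : (j : ℕ) < n (k + 1) := lt_of_lt_of_le hj (hr (k + 1) (by omega))
      rw [Finset.sum_eq_single (⟨(j : ℕ), hjn⟩ : Fin (n (k + 1)))]
      · rw [hW, if_pos ⟨rfl, hj⟩, one_mul, ih hk' _ l, dif_pos hj]
      · intro t _ ht
        rw [hW, if_neg, zero_mul]
        rintro ⟨h1, -⟩
        exact ht (Fin.ext h1.symm)
      · intro h; exact absurd (Finset.mem_univ _) h
    · rw [dif_neg hj]
      apply Finset.sum_eq_zero
      intro t _
      rw [hW, if_neg (fun h => hj h.2), zero_mul]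

theorem effA_Wctr_K (n : ℕ → ℕ) (K r : ℕ) (B : Matrix (Fin (n (K + 1))) (Fin r) ℝ)
    (C : Matrix (Fin r) (Fin (n 0)) ℝ) (hK : 1 ≤ K) (hr : ∀ i ≤ K + 1, r ≤ n i) :
    effA n (Wctr n K r B C) K = B * C := by
  obtain ⟨KK, rfl⟩ : ∃ KK, K = KK + 1 := ⟨K - 1, by omega⟩
  ext j l
  show (Wctr n (KK + 1) r B C (KK + 1) * effA n (Wctr n (KK + 1) r B C) KK) j l = _
  rw [Matrix.mul_apply, Matrix.mul_apply]
  have hW : ∀ t : Fin (n (KK + 1)), Wctr n (KK + 1) r B C (KK + 1) j t =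
      if ht : (t : ℕ) < r then B j ⟨(t : ℕ), ht⟩ else 0 := by
    intro t
    simp only [Wctr, Matrix.of_apply]
    rw [dif_neg (Nat.succ_ne_zero KK), dif_pos trivial]
    rfl
  have hsummand : ∀ t : Fin (n (KK + 1)),
      Wctr n (KK + 1) r B C (KK + 1) j t * effA n (Wctr n (KK + 1) r B C) KK t l =
      (fun i : ℕ => if hi : i < r then B j ⟨i, hi⟩ * C ⟨i, hi⟩ l else 0) (t : ℕ) := by
    intro t
    rw [hW, effA_Wctr n (KK + 1) r B C hr KK (Nat.lt_succ_self KK)]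
    by_cases ht : (t : ℕ) < r
    · simp only [dif_pos ht]
    · simp only [dif_neg ht, zero_mul]
  set g : ℕ → ℝ := fun i => if hi : i < r then B j ⟨i, hi⟩ * C ⟨i, hi⟩ l else 0 with hg
  calc ∑ t, Wctr n (KK + 1) r B C (KK + 1) j t * effA n (Wctr n (KK + 1) r B C) KK t l
      = ∑ i ∈ Finset.range (n (KK + 1)), g i := by
        rw [Finset.sum_congr rfl (fun t _ => hsummand t), Fin.sum_univ_eq_sum_range g (n (KK + 1))]
    _ = ∑ i ∈ Finset.range r, g i :=
        (Finset.sum_subset (Finset.range_subset_range.2 (hr (KK + 1) (by omega)))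
          (fun i _ hi => dif_neg (by simpa using hi))).symm
    _ = ∑ t : Fin r, g ↑t := (Fin.sum_univ_eq_sum_range g r).symm
    _ = ∑ t : Fin r, B j t * C t l := Finset.sum_congr rfl (fun t _ => dif_pos t.2)

theorem effB_cctr (n : ℕ → ℕ) (K : ℕ) (b' : Fin (n (K + 1)) → ℝ) (t0 : ℝ)
    (W : ∀ i : ℕ, Matrix (Fin (n (i + 1))) (Fin (n i)) ℝ) :
    ∀ k < K, effB n W (cctr n K b' t0 W) k = fun _ => t0 := by
  intro k
  induction k with
  | zero =>
    intro _
    show cctr n K b' t0 W 0 = _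
    funext j
    simp only [cctr]
    rw [if_pos trivial]
  | succ k ih =>
    intro hk
    show (W (k + 1)).mulVec (effB n W (cctr n K b' t0 W) k) + cctr n K b' t0 W (k + 1) = _
    rw [ih ((Nat.lt_succ_self k).trans hk)]
    funext j
    simp only [Pi.add_apply, cctr, if_neg (Nat.succ_ne_zero k), dif_neg (Nat.ne_of_lt hk)]
    ring

theorem effB_cctr_K (n : ℕ → ℕ) (K : ℕ) (b' : Fin (n (K + 1)) → ℝ) (t0 : ℝ)
    (W : ∀ i : ℕ, Matrix (Fin (n (i + 1))) (Fin (n i)) ℝ) (hK : 1 ≤ K) :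
    effB n W (cctr n K b' t0 W) K = b' := by
  obtain ⟨KK, rfl⟩ : ∃ KK, K = KK + 1 := ⟨K - 1, by omega⟩
  show (W (KK + 1)).mulVec (effB n W (cctr n (KK + 1) b' t0 W) KK) + cctr n (KK + 1) b' t0 W (KK + 1) = _
  rw [effB_cctr n (KK + 1) b' t0 W KK (Nat.lt_succ_self KK)]
  funext j
  simp only [Pi.add_apply, cctr, if_neg (Nat.succ_ne_zero KK)]
  rw [dif_pos trivial]
  show (W (KK + 1)).mulVec (fun _ => t0) j + (b' j - (W (KK + 1)).mulVec (fun _ => t0) j) = b' j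
  ring

theorem preact_pos (n : ℕ → ℕ) (K r : ℕ) (B : Matrix (Fin (n (K + 1))) (Fin r) ℝ)
    (C : Matrix (Fin r) (Fin (n 0)) ℝ) (b' : Fin (n (K + 1)) → ℝ) (t0 : ℝ)
    (hr : ∀ i ≤ K + 1, r ≤ n i) (x : Fin (n 0) → ℝ)
    (hbd : ∑ t : Fin r, |C.mulVec x t| + 1 ≤ t0) :
    ∀ k < K, ∀ j, 0 < preact n (Wctr n K r B C) (cctr n K b' t0 (Wctr n K r B C)) x k j := by
  intro k
  induction k using Nat.strong_induction_on with
  | _ k ih =>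
    intro hk j
    have h0 : ∀ k' < k, ∀ j, 0 ≤ preact n (Wctr n K r B C) (cctr n K b' t0 (Wctr n K r B C)) x k' j :=
      fun k' hk' j => (ih k' hk' (hk'.trans hk) j).le
    rw [preact_eq_affine n _ _ x k h0]
    have hmv : (effA n (Wctr n K r B C) k).mulVec x j =
        if hj : (j : ℕ) < r then C.mulVec x ⟨(j : ℕ), hj⟩ else 0 := by
      rw [Matrix.mulVec, dotProduct]
      by_cases hj : (j : ℕ) < r
      · rw [dif_pos hj, Matrix.mulVec, dotProduct]
        apply Finset.sum_congr rfl
        intro l _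
        rw [effA_Wctr n K r B C hr k hk j l, dif_pos hj]
      · rw [dif_neg hj]
        apply Finset.sum_eq_zero
        intro l _
        rw [effA_Wctr n K r B C hr k hk j l, dif_neg hj, zero_mul]
    simp only [effB_cctr n K b' t0 (Wctr n K r B C) k hk, hmv]
    have hsum : (0 : ℝ) ≤ ∑ t : Fin r, |C.mulVec x t| :=
      Finset.sum_nonneg fun t _ => abs_nonneg _
    by_cases hj : (j : ℕ) < r
    · rw [dif_pos hj]
      have h1 : |C.mulVec x ⟨(j : ℕ), hj⟩| ≤ ∑ t : Fin r, |C.mulVec x t| :=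
        Finset.single_le_sum (f := fun t => |C.mulVec x t|) (fun t _ => abs_nonneg _)
          (Finset.mem_univ _)
      have h2 := (abs_le.1 h1).1
      linarith
    · rw [dif_neg hj]
      linarith

abbrev Esp (n : ℕ → ℕ) (K : ℕ) : Type :=
  ∀ i : Fin (K + 1), (Fin (n ((i : ℕ) + 1)) → Fin (n (i : ℕ)) → ℝ) × (Fin (n ((i : ℕ) + 1)) → ℝ)

noncomputable def unA (n : ℕ → ℕ) (K : ℕ) (p : Esp n K) :
    ∀ i : ℕ, Matrix (Fin (n (i + 1))) (Fin (n i)) ℝ :=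
  fun i => if h : i < K + 1 then Matrix.of ((p ⟨i, h⟩).1) else 0

noncomputable def unb (n : ℕ → ℕ) (K : ℕ) (p : Esp n K) :
    ∀ i : ℕ, Fin (n (i + 1)) → ℝ :=
  fun i => if h : i < K + 1 then (p ⟨i, h⟩).2 else 0

noncomputable def packP (n : ℕ → ℕ) (K : ℕ)
    (W : ∀ i : ℕ, Matrix (Fin (n (i + 1))) (Fin (n i)) ℝ)
    (c : ∀ i : ℕ, Fin (n (i + 1)) → ℝ) : Esp n K :=
  fun i => (fun j k => W (i : ℕ) j k, c (i : ℕ))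

theorem unA_pack (n : ℕ → ℕ) (K : ℕ) (W : ∀ i : ℕ, Matrix (Fin (n (i + 1))) (Fin (n i)) ℝ)
    (c : ∀ i : ℕ, Fin (n (i + 1)) → ℝ) :
    ∀ i < K + 1, unA n K (packP n K W c) i = W i := by
  intro i hi
  simp only [unA, dif_pos hi, packP]
  rfl

theorem unb_pack (n : ℕ → ℕ) (K : ℕ) (W : ∀ i : ℕ, Matrix (Fin (n (i + 1))) (Fin (n i)) ℝ)
    (c : ∀ i : ℕ, Fin (n (i + 1)) → ℝ) :
    ∀ i < K + 1, unb n K (packP n K W c) i = c i := by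
  intro i hi
  simp only [unb, dif_pos hi, packP]

theorem cont_unA (n : ℕ → ℕ) (K : ℕ) (i : ℕ) (j : Fin (n (i + 1))) (k : Fin (n i)) :
    Continuous fun p : Esp n K => unA n K p i j k := by
  by_cases h : i < K + 1
  · simp only [unA, dif_pos h]
    exact (continuous_apply k).comp ((continuous_apply j).comp
      (continuous_fst.comp (continuous_apply (⟨i, h⟩ : Fin (K + 1)))))
  · simp only [unA, dif_neg h]
    exact continuous_const

theorem cont_unb (n : ℕ → ℕ) (K : ℕ) (i : ℕ) (j : Fin (n (i + 1))) :
    Continuous fun p : Esp n K => unb n K p i j := by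
  by_cases h : i < K + 1
  · simp only [unb, dif_pos h]
    exact (continuous_apply j).comp (continuous_snd.comp (continuous_apply (⟨i, h⟩ : Fin (K + 1))))
  · simp only [unb, dif_neg h]
    exact continuous_const

theorem cont_act (n : ℕ → ℕ) (K : ℕ) (x : Fin (n 0) → ℝ) (k : ℕ) (j : Fin (n k)) :
    Continuous fun p : Esp n K => act n (unA n K p) (unb n K p) x k j := by
  induction k with
  | zero => exact continuous_const
  | succ k ih =>
    show Continuous fun p : Esp n K =>
      max ((unA n K p k).mulVec (act n (unA n K p) (unb n K p) x k) j + unb n K p k j) 0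
    refine Continuous.max (Continuous.add ?_ (cont_unb n K k j)) continuous_const
    show Continuous fun p : Esp n K =>
      ∑ t, unA n K p k j t * act n (unA n K p) (unb n K p) x k t
    exact continuous_finset_sum _ fun t _ => (cont_unA n K k j t).mul (ih t)

theorem cont_preact (n : ℕ → ℕ) (K : ℕ) (x : Fin (n 0) → ℝ) (k : ℕ) (j : Fin (n (k + 1))) :
    Continuous fun p : Esp n K => preact n (unA n K p) (unb n K p) x k j := by
  show Continuous fun p : Esp n K =>
    (∑ t, unA n K p k j t * act n (unA n K p) (unb n K p) x k t) + unb n K p k j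
  exact Continuous.add (continuous_finset_sum _ fun t _ => (cont_unA n K k j t).mul
    (cont_act n K x k t)) (cont_unb n K k j)

theorem cont_effA (n : ℕ → ℕ) (K : ℕ) (k : ℕ) (j : Fin (n (k + 1))) (l : Fin (n 0)) :
    Continuous fun p : Esp n K => effA n (unA n K p) k j l := by
  induction k with
  | zero => exact cont_unA n K 0 j l
  | succ k ih =>
    show Continuous fun p : Esp n K => ∑ t, unA n K p (k + 1) j t * effA n (unA n K p) k t l
    exact continuous_finset_sum _ fun t _ => (cont_unA n K (k + 1) j t).mul (ih t)

theorem cont_effB (n : ℕ → ℕ) (K : ℕ) (k : ℕ) (j : Fin (n (k + 1))) :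
    Continuous fun p : Esp n K => effB n (unA n K p) (unb n K p) k j := by
  induction k with
  | zero => exact cont_unb n K 0 j
  | succ k ih =>
    show Continuous fun p : Esp n K =>
      (∑ t, unA n K p (k + 1) j t * effB n (unA n K p) (unb n K p) k t) + unb n K p (k + 1) j
    exact Continuous.add (continuous_finset_sum _ fun t _ => (cont_unA n K (k + 1) j t).mul (ih t))
      (cont_unb n K (k + 1) j)

theorem entryA_le_paramDist (n : ℕ → ℕ) (K : ℕ)
    (W W' : ∀ i : ℕ, Matrix (Fin (n (i + 1))) (Fin (n i)) ℝ)
    (c c' : ∀ i : ℕ, Fin (n (i + 1)) → ℝ) (i : ℕ) (hi : i < K + 1)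
    (j : Fin (n (i + 1))) (k : Fin (n i)) :
    |W i j k - W' i j k| ≤ paramDist n K W W' c c' := by
  rw [← Real.sqrt_sq_eq_abs]
  apply Real.sqrt_le_sqrt
  calc (W i j k - W' i j k) ^ 2
      ≤ ∑ k', (W i j k' - W' i j k') ^ 2 :=
        Finset.single_le_sum (f := fun k' => (W i j k' - W' i j k') ^ 2)
          (fun _ _ => sq_nonneg _) (Finset.mem_univ k)
    _ ≤ ∑ j', ∑ k', (W i j' k' - W' i j' k') ^ 2 :=
        Finset.single_le_sum (f := fun j' => ∑ k', (W i j' k' - W' i j' k') ^ 2)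
          (fun _ _ => Finset.sum_nonneg fun _ _ => sq_nonneg _) (Finset.mem_univ j)
    _ ≤ (∑ j', ∑ k', (W i j' k' - W' i j' k') ^ 2) + ∑ j', (c i j' - c' i j') ^ 2 :=
        le_add_of_nonneg_right (Finset.sum_nonneg fun _ _ => sq_nonneg _)
    _ ≤ ∑ i' ∈ Finset.range (K + 1),
          ((∑ j', ∑ k', (W i' j' k' - W' i' j' k') ^ 2) + ∑ j', (c i' j' - c' i' j') ^ 2) :=
        Finset.single_le_sum
          (f := fun i' => (∑ j', ∑ k', (W i' j' k' - W' i' j' k') ^ 2) +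
            ∑ j', (c i' j' - c' i' j') ^ 2)
          (fun _ _ => add_nonneg (Finset.sum_nonneg fun _ _ => Finset.sum_nonneg fun _ _ =>
            sq_nonneg _) (Finset.sum_nonneg fun _ _ => sq_nonneg _))
          (Finset.mem_range.2 hi)

theorem entryb_le_paramDist (n : ℕ → ℕ) (K : ℕ)
    (W W' : ∀ i : ℕ, Matrix (Fin (n (i + 1))) (Fin (n i)) ℝ)
    (c c' : ∀ i : ℕ, Fin (n (i + 1)) → ℝ) (i : ℕ) (hi : i < K + 1)
    (j : Fin (n (i + 1))) :
    |c i j - c' i j| ≤ paramDist n K W W' c c' := by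
  rw [← Real.sqrt_sq_eq_abs]
  apply Real.sqrt_le_sqrt
  calc (c i j - c' i j) ^ 2
      ≤ ∑ j', (c i j' - c' i j') ^ 2 :=
        Finset.single_le_sum (f := fun j' => (c i j' - c' i j') ^ 2)
          (fun _ _ => sq_nonneg _) (Finset.mem_univ j)
    _ ≤ (∑ j', ∑ k', (W i j' k' - W' i j' k') ^ 2) + ∑ j', (c i j' - c' i j') ^ 2 :=
        le_add_of_nonneg_left (Finset.sum_nonneg fun _ _ => Finset.sum_nonneg fun _ _ =>
          sq_nonneg _)
    _ ≤ ∑ i' ∈ Finset.range (K + 1),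
          ((∑ j', ∑ k', (W i' j' k' - W' i' j' k') ^ 2) + ∑ j', (c i' j' - c' i' j') ^ 2) :=
        Finset.single_le_sum
          (f := fun i' => (∑ j', ∑ k', (W i' j' k' - W' i' j' k') ^ 2) +
            ∑ j', (c i' j' - c' i' j') ^ 2)
          (fun _ _ => add_nonneg (Finset.sum_nonneg fun _ _ => Finset.sum_nonneg fun _ _ =>
            sq_nonneg _) (Finset.sum_nonneg fun _ _ => sq_nonneg _))
          (Finset.mem_range.2 hi)

theorem dist_pack_le (n : ℕ → ℕ) (K : ℕ)
    (W W' : ∀ i : ℕ, Matrix (Fin (n (i + 1))) (Fin (n i)) ℝ)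
    (c c' : ∀ i : ℕ, Fin (n (i + 1)) → ℝ) :
    dist (packP n K W c) (packP n K W' c') ≤ paramDist n K W W' c c' := by
  have h0 : 0 ≤ paramDist n K W W' c c' := Real.sqrt_nonneg _
  rw [dist_pi_le_iff h0]
  intro i
  rw [Prod.dist_eq]
  apply max_le
  · rw [dist_pi_le_iff h0]
    intro j
    rw [dist_pi_le_iff h0]
    intro k
    rw [Real.dist_eq]
    exact entryA_le_paramDist n K W W' c c' (i : ℕ) i.2 j k
  · rw [dist_pi_le_iff h0]
    intro j
    rw [Real.dist_eq]
    exact entryb_le_paramDist n K W W' c c' (i : ℕ) i.2 j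


/-- If `(A', b')` is a local minimum of the rank-`s`-constrained affine
training objective whose value lies strictly above the infimum of the MLP training
objective `L_MLP`, then `L_MLP` possesses a suboptimal local minimum: a local minimum
`(W, c)` whose value equals `L_aff(A', b')` and is strictly above `inf L_MLP`. -/
theorem suboptimal_local_min_exists (n : ℕ → ℕ) (K N : ℕ)
    (x : Fin N → Fin (n 0) → ℝ)
    (ℓ : (Fin N → Fin (n (K + 1)) → ℝ) → ℝ) (hℓ : Continuous ℓ)
    (A' : Matrix (Fin (n (K + 1))) (Fin (n 0)) ℝ) (b' : Fin (n (K + 1)) → ℝ)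
    (hrank : A'.rank ≤ (Finset.range (K + 2)).inf' (by simp) n)
    (hmin : ∃ ε > 0, ∀ (A : Matrix (Fin (n (K + 1))) (Fin (n 0)) ℝ)
        (b : Fin (n (K + 1)) → ℝ),
        A.rank ≤ (Finset.range (K + 2)).inf' (by simp) n →
        matNorm (A - A') + vecNorm (b - b') < ε →
        ℓ (fun i => A'.mulVec (x i) + b') ≤ ℓ (fun i => A.mulVec (x i) + b))
    (hsub : sInf (Set.range
        (fun p : (∀ i : ℕ, Matrix (Fin (n (i + 1))) (Fin (n i)) ℝ) ×
                 (∀ i : ℕ, Fin (n (i + 1)) → ℝ) =>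
          ℓ (fun i => mlp n p.1 p.2 K (x i)))) <
      ℓ (fun i => A'.mulVec (x i) + b')) :
    ∃ (W : ∀ i : ℕ, Matrix (Fin (n (i + 1))) (Fin (n i)) ℝ)
      (c : ∀ i : ℕ, Fin (n (i + 1)) → ℝ),
      (∃ δ > 0, ∀ (W' : ∀ i : ℕ, Matrix (Fin (n (i + 1))) (Fin (n i)) ℝ)
        (c' : ∀ i : ℕ, Fin (n (i + 1)) → ℝ),
        paramDist n K W W' c c' < δ →
        ℓ (fun i => mlp n W c K (x i)) ≤ ℓ (fun i => mlp n W' c' K (x i))) ∧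
      ℓ (fun i => mlp n W c K (x i)) = ℓ (fun i => A'.mulVec (x i) + b') ∧
      sInf (Set.range
        (fun p : (∀ i : ℕ, Matrix (Fin (n (i + 1))) (Fin (n i)) ℝ) ×
                 (∀ i : ℕ, Fin (n (i + 1)) → ℝ) =>
          ℓ (fun i => mlp n p.1 p.2 K (x i)))) <
        ℓ (fun i => mlp n W c K (x i)) := by
  obtain ⟨ε, hε, hmin⟩ := hmin
  have hins : ∀ i ≤ K + 1, (Finset.range (K + 2)).inf' (by simp) n ≤ n i :=
    fun i hi => Finset.inf'_le n (Finset.mem_range.2 (by omega))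
  -- construct the center
  obtain ⟨W, c, hAeq, hbeq, hpos⟩ :
      ∃ (W : ∀ i : ℕ, Matrix (Fin (n (i + 1))) (Fin (n i)) ℝ)
        (c : ∀ i : ℕ, Fin (n (i + 1)) → ℝ),
        effA n W K = A' ∧ effB n W c K = b' ∧
        ∀ (i : Fin N) (k : ℕ), k < K → ∀ j, 0 < preact n W c (x i) k j := by
    rcases Nat.eq_zero_or_pos K with hK0 | hK1
    · subst hK0
      exact ⟨fun i => Nat.casesOn (motive := fun i => Matrix (Fin (n (i + 1))) (Fin (n i)) ℝ) i A'
          (fun _ => 0),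
        fun i => Nat.casesOn (motive := fun i => Fin (n (i + 1)) → ℝ) i b' (fun _ => 0),
        rfl, rfl, fun i k hk j => absurd hk (Nat.not_lt_zero k)⟩
    · set r := A'.rank with hrdef
      have hrle : ∀ i ≤ K + 1, r ≤ n i := fun i hi => le_trans hrank (hins i hi)
      obtain ⟨B, C, hBC⟩ := matrix_fac A'
      set t0 : ℝ := 1 + ∑ i : Fin N, ∑ t : Fin r, |C.mulVec (x i) t| with ht0
      refine ⟨Wctr n K r B C, cctr n K b' t0 (Wctr n K r B C), ?_, effB_cctr_K n K b' t0 _ hK1, ?_⟩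
      · rw [effA_Wctr_K n K r B C hK1 hrle, ← hBC]
      · intro i k hk j
        refine preact_pos n K r B C b' t0 hrle (x i) ?_ k hk j
        have h1 : ∑ t : Fin r, |C.mulVec (x i) t| ≤ ∑ i' : Fin N, ∑ t : Fin r, |C.mulVec (x i') t| :=
          Finset.single_le_sum (f := fun i' => ∑ t : Fin r, |C.mulVec (x i') t|)
            (fun _ _ => Finset.sum_nonneg fun _ _ => abs_nonneg _) (Finset.mem_univ i)
        linarith
  -- value at center
  have hcenter : ∀ i, mlp n W c K (x i) = fun j => A'.mulVec (x i) j + b' j := by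
    intro i
    show preact n W c (x i) K = _
    rw [preact_eq_affine n W c (x i) K (fun k' hk' j => (hpos i k' hk' j).le), hAeq, hbeq]
  have hcenterℓ : ℓ (fun i => mlp n W c K (x i)) = ℓ (fun i => A'.mulVec (x i) + b') := by
    congr 1
    funext i
    rw [hcenter i]
    rfl
  -- the open good set
  set q0 : Esp n K := packP n K W c with hq0def
  set U : Set (Esp n K) :=
    (⋂ i : Fin N, ⋂ k : Fin K, ⋂ j : Fin (n ((k : ℕ) + 1)),
      {p | 0 < preact n (unA n K p) (unb n K p) (x i) (k : ℕ) j}) ∩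
    {p | matNorm (effA n (unA n K p) K - A') +
      vecNorm (effB n (unA n K p) (unb n K p) K - b') < ε} with hUdef
  have hUopen : IsOpen U := by
    apply IsOpen.inter
    · exact isOpen_iInter_of_finite fun i => isOpen_iInter_of_finite fun k =>
        isOpen_iInter_of_finite fun j =>
          isOpen_lt continuous_const (cont_preact n K (x i) (k : ℕ) j)
    · apply isOpen_lt _ continuous_const
      apply Continuous.add
      · show Continuous fun p : Esp n K =>
          Real.sqrt (∑ j, ∑ l, ((effA n (unA n K p) K - A') j l) ^ 2)
        apply Real.continuous_sqrt.comp
        apply continuous_finset_sum _ fun j _ => continuous_finset_sum _ fun l _ => ?_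
        show Continuous fun p : Esp n K => (effA n (unA n K p) K j l - A' j l) ^ 2
        exact ((cont_effA n K K j l).sub continuous_const).pow 2
      · show Continuous fun p : Esp n K =>
          Real.sqrt (∑ j, ((effB n (unA n K p) (unb n K p) K - b') j) ^ 2)
        apply Real.continuous_sqrt.comp
        apply continuous_finset_sum _ fun j _ => ?_
        show Continuous fun p : Esp n K => (effB n (unA n K p) (unb n K p) K j - b' j) ^ 2
        exact ((cont_effB n K K j).sub continuous_const).pow 2
  have hq0U : q0 ∈ U := by
    constructor
    · refine Set.mem_iInter.2 fun i => Set.mem_iInter.2 fun k => Set.mem_iInter.2 fun j => ?_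
      show 0 < preact n (unA n K q0) (unb n K q0) (x i) (k : ℕ) j
      rw [preact_congr n (unA n K q0) W (unb n K q0) c (x i) (k : ℕ)
        (fun i' hi' => unA_pack n K W c i' (by omega))
        (fun i' hi' => unb_pack n K W c i' (by omega))]
      exact hpos i (k : ℕ) k.2 j
    · show matNorm (effA n (unA n K q0) K - A') +
        vecNorm (effB n (unA n K q0) (unb n K q0) K - b') < ε
      rw [effA_congr n (unA n K q0) W K (fun i' hi' => unA_pack n K W c i' (by omega)),
        effB_congr n (unA n K q0) W (unb n K q0) c K
          (fun i' hi' => unA_pack n K W c i' (by omega))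
          (fun i' hi' => unb_pack n K W c i' (by omega)),
        hAeq, hbeq, sub_self, sub_self]
      have h1 : matNorm (0 : Matrix (Fin (n (K + 1))) (Fin (n 0)) ℝ) = 0 := by
        simp [matNorm]
      have h2 : vecNorm (0 : Fin (n (K + 1)) → ℝ) = 0 := by
        simp [vecNorm]
      rw [h1, h2]
      linarith
  obtain ⟨δ, hδ, hball⟩ := Metric.isOpen_iff.1 hUopen q0 hq0U
  refine ⟨W, c, ⟨δ, hδ, ?_⟩, hcenterℓ, by rw [hcenterℓ]; exact hsub⟩
  intro W' c' hdist
  set p' : Esp n K := packP n K W' c' with hp'def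
  have hd : p' ∈ Metric.ball q0 δ := by
    rw [Metric.mem_ball, dist_comm]
    exact (dist_pack_le n K W W' c c').trans_lt hdist
  obtain ⟨h1, h2⟩ := hball hd
  -- transfer to (W', c')
  have hAe : effA n (unA n K p') K = effA n W' K :=
    effA_congr n (unA n K p') W' K (fun i' hi' => unA_pack n K W' c' i' (by omega))
  have hbe : effB n (unA n K p') (unb n K p') K = effB n W' c' K :=
    effB_congr n (unA n K p') W' (unb n K p') c' K
      (fun i' hi' => unA_pack n K W' c' i' (by omega))
      (fun i' hi' => unb_pack n K W' c' i' (by omega))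
  have hpos' : ∀ (i : Fin N) (k : ℕ), k < K → ∀ j, 0 < preact n W' c' (x i) k j := by
    intro i k hk j
    have h3 := Set.mem_iInter.1 (Set.mem_iInter.1 (Set.mem_iInter.1 h1 i) ⟨k, hk⟩) j
    have h4 : 0 < preact n (unA n K p') (unb n K p') (x i) k j := h3
    rwa [preact_congr n (unA n K p') W' (unb n K p') c' (x i) k
      (fun i' hi' => unA_pack n K W' c' i' (by omega))
      (fun i' hi' => unb_pack n K W' c' i' (by omega))] at h4
  have hmlp' : ∀ i, mlp n W' c' K (x i) =
      fun j => (effA n W' K).mulVec (x i) j + effB n W' c' K j := by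
    intro i
    show preact n W' c' (x i) K = _
    exact preact_eq_affine n W' c' (x i) K (fun k hk j => (hpos' i k hk j).le)
  have hrank' : (effA n W' K).rank ≤ (Finset.range (K + 2)).inf' (by simp) n := by
    obtain ⟨i0, hi0m, hi0⟩ := Finset.exists_mem_eq_inf'
      (show (Finset.range (K + 2)).Nonempty by simp) n
    rw [hi0]
    have hi0K : i0 < K + 2 := Finset.mem_range.1 hi0m
    rcases i0 with _ | m
    · exact (effA n W' K).rank_le_card_width.trans (by simp)
    · exact (rank_effA_le n W' K m (by omega)).trans
        ((effA n W' m).rank_le_card_height.trans (by simp))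
  have h2' : matNorm (effA n (unA n K p') K - A') +
      vecNorm (effB n (unA n K p') (unb n K p') K - b') < ε := h2
  rw [hAe, hbe] at h2'
  have hle := hmin (effA n W' K) (effB n W' c' K) hrank' h2'
  calc ℓ (fun i => mlp n W c K (x i)) = ℓ (fun i => A'.mulVec (x i) + b') := hcenterℓ
    _ ≤ ℓ (fun i => (effA n W' K).mulVec (x i) + effB n W' c' K) := hle
    _ = ℓ (fun i => mlp n W' c' K (x i)) := by
        congr 1
        funext i
        rw [hmlp' i]
        rfl
end

section
/- Let F_φ be an L-layer ReLU MLP with L ≥ 2, let {(x_i, y_i)}_{i=1}^N be a training set, let ℓ : (ℝ^n)^N → ℝ, and define L_MLP(φ) = ℓ(F_φ(x_1), …, F_φ(x_N)). If φ' = (A_1, b_1, …, A_L, b_L) is a local minimum of L_MLP, then for every c > 0 the rescaled parameter φ'_c = (c A_1, c b_1, c^{−1} A_2, b_2, A_3, b_3, …, A_L, b_L) is also a local minimum of L_MLP, with the same loss value L_MLP(φ'_c) = L_MLP(φ'). In particular, any local minimum of an MLP with at least one hidden layer gives rise to a one-parameter family of local minima. -/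
open Matrix

lemma act_one (n : ℕ → ℕ)
    (A : ∀ i : ℕ, Matrix (Fin (n (i + 1))) (Fin (n i)) ℝ)
    (b : ∀ i : ℕ, Fin (n (i + 1)) → ℝ)
    (x : Fin (n 0) → ℝ) (c : ℝ) (hc : 0 < c) :
    act n (Function.update (Function.update A 0 (c • A 0)) 1 (c⁻¹ • A 1))
      (Function.update b 0 (c • b 0)) x 1 = c • act n A b x 1 := by
  funext j
  simp only [act, Pi.smul_apply, smul_eq_mul,
    Function.update_of_ne (by norm_num : (0:ℕ) ≠ 1), Function.update_self,
    Matrix.smul_mulVec]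
  rw [mul_max_of_nonneg _ _ hc.le, mul_zero, mul_add]

lemma preact_resc (n : ℕ → ℕ)
    (A : ∀ i : ℕ, Matrix (Fin (n (i + 1))) (Fin (n i)) ℝ)
    (b : ∀ i : ℕ, Fin (n (i + 1)) → ℝ)
    (x : Fin (n 0) → ℝ) (c : ℝ) (hc : 0 < c) (m : ℕ) :
    preact n (Function.update (Function.update A 0 (c • A 0)) 1 (c⁻¹ • A 1))
      (Function.update b 0 (c • b 0)) x (m + 1) = preact n A b x (m + 1) := by
  induction m with
  | zero =>
    funext j
    simp only [preact, act_one n A b x c hc, Function.update_self,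
      Function.update_of_ne (by norm_num : (1:ℕ) ≠ 0),
      Matrix.smul_mulVec, Matrix.mulVec_smul, Pi.smul_apply, smul_eq_mul]
    rw [← mul_assoc, mul_inv_cancel₀ hc.ne', one_mul]
  | succ m ih =>
    funext j
    have hact : act n (Function.update (Function.update A 0 (c • A 0)) 1 (c⁻¹ • A 1))
        (Function.update b 0 (c • b 0)) x (m + 2) = act n A b x (m + 2) := by
      funext i
      show max (preact n _ _ x (m+1) i) 0 = max (preact n A b x (m+1) i) 0
      rw [ih]
    simp only [preact, hact,
      Function.update_of_ne (by omega : m + 2 ≠ 1),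
      Function.update_of_ne (by omega : m + 2 ≠ 0)]

lemma entry_bound (M t u v : ℝ) (ht : |t| ≤ M) (h : u = t * v) : u ^ 2 ≤ M ^ 2 * v ^ 2 := by
  subst h
  rw [mul_pow]
  refine mul_le_mul_of_nonneg_right ?_ (sq_nonneg v)
  calc t ^ 2 = |t| ^ 2 := (sq_abs t).symm
    _ ≤ M ^ 2 := pow_le_pow_left₀ (abs_nonneg t) ht 2

/-- If `(A, b)` is a local minimum of the MLP training objective of a
network with at least one hidden layer (`L = K + 1 ≥ 2`), then for every `c > 0` the
rescaled parameter `(c A_1, c b_1, c⁻¹ A_2, b_2, A_3, b_3, …)` is also a local minimum,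
with the same loss value. -/
theorem rescaled_local_min (n : ℕ → ℕ) (K : ℕ) (hK : 1 ≤ K) (N : ℕ)
    (x : Fin N → Fin (n 0) → ℝ)
    (ℓ : (Fin N → Fin (n (K + 1)) → ℝ) → ℝ)
    (A : ∀ i : ℕ, Matrix (Fin (n (i + 1))) (Fin (n i)) ℝ)
    (b : ∀ i : ℕ, Fin (n (i + 1)) → ℝ)
    (hmin : ∃ δ > 0, ∀ (A' : ∀ i : ℕ, Matrix (Fin (n (i + 1))) (Fin (n i)) ℝ)
      (b' : ∀ i : ℕ, Fin (n (i + 1)) → ℝ),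
      paramDist n K A A' b b' < δ →
      ℓ (fun i => mlp n A b K (x i)) ≤ ℓ (fun i => mlp n A' b' K (x i)))
    (c : ℝ) (hc : 0 < c) :
    (∃ δ > 0, ∀ (A' : ∀ i : ℕ, Matrix (Fin (n (i + 1))) (Fin (n i)) ℝ)
      (b' : ∀ i : ℕ, Fin (n (i + 1)) → ℝ),
      paramDist n K (Function.update (Function.update A 0 (c • A 0)) 1 (c⁻¹ • A 1))
        A' (Function.update b 0 (c • b 0)) b' < δ →
      ℓ (fun i => mlp n (Function.update (Function.update A 0 (c • A 0)) 1 (c⁻¹ • A 1))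
          (Function.update b 0 (c • b 0)) K (x i)) ≤
        ℓ (fun i => mlp n A' b' K (x i))) ∧
    ℓ (fun i => mlp n (Function.update (Function.update A 0 (c • A 0)) 1 (c⁻¹ • A 1))
        (Function.update b 0 (c • b 0)) K (x i)) =
      ℓ (fun i => mlp n A b K (x i)) := by
  obtain ⟨m, rfl⟩ : ∃ m, K = m + 1 := ⟨K - 1, by omega⟩
  obtain ⟨δ, hδ, hloc⟩ := hmin
  set M : ℝ := max c c⁻¹ with hMdef
  have hM0 : 0 < M := lt_max_of_lt_left hc
  have hM1 : 1 ≤ M := by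
    rcases le_total 1 c with h | h
    · exact le_max_of_le_left h
    · exact le_max_of_le_right (one_le_inv_iff₀.mpr ⟨hc, h⟩)
  have hcM : |c| ≤ M := by rw [abs_of_pos hc]; exact le_max_left _ _
  have hciM : |c⁻¹| ≤ M := by
    rw [abs_of_pos (inv_pos.mpr hc)]; exact le_max_right _ _
  have h1M : |(1:ℝ)| ≤ M := by rw [abs_one]; exact hM1
  have hmlp : (fun i => mlp n (Function.update (Function.update A 0 (c • A 0)) 1 (c⁻¹ • A 1))
      (Function.update b 0 (c • b 0)) (m + 1) (x i)) = fun i => mlp n A b (m + 1) (x i) := by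
    funext i
    exact preact_resc n A b (x i) c hc m
  refine ⟨⟨δ / M, div_pos hδ hM0, fun A' b' hlt => ?_⟩, by rw [hmlp]⟩
  set A'' : ∀ i : ℕ, Matrix (Fin (n (i + 1))) (Fin (n i)) ℝ :=
    Function.update (Function.update A' 0 (c⁻¹ • A' 0)) 1 (c • A' 1) with hA''
  set b'' : ∀ i : ℕ, Fin (n (i + 1)) → ℝ := Function.update b' 0 (c⁻¹ • b' 0) with hb''
  have hmlp' : (fun i => mlp n A'' b'' (m + 1) (x i)) = fun i => mlp n A' b' (m + 1) (x i) := by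
    funext i
    have := preact_resc n A' b' (x i) c⁻¹ (inv_pos.mpr hc) m
    rw [inv_inv] at this
    exact this
  rw [hmlp, ← hmlp']
  apply hloc
  -- distance bound
  have hdist : paramDist n (m + 1) A A'' b b'' ≤
      M * paramDist n (m + 1) (Function.update (Function.update A 0 (c • A 0)) 1 (c⁻¹ • A 1))
        A' (Function.update b 0 (c • b 0)) b' := by
    unfold paramDist
    rw [← Real.sqrt_sq hM0.le, ← Real.sqrt_mul (sq_nonneg M)]
    apply Real.sqrt_le_sqrt
    rw [Finset.mul_sum]
    apply Finset.sum_le_sum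
    intro i _
    rw [mul_add]
    apply add_le_add
    · rw [Finset.mul_sum]
      apply Finset.sum_le_sum
      intro j _
      rw [Finset.mul_sum]
      apply Finset.sum_le_sum
      intro k _
      match i with
      | 0 =>
        apply entry_bound M c⁻¹ _ _ hciM
        simp only [hA'', Function.update_of_ne (by norm_num : (0:ℕ) ≠ 1),
          Function.update_self, Matrix.smul_apply, smul_eq_mul]
        field_simp
      | 1 =>
        apply entry_bound M c _ _ hcM
        simp only [hA'', Function.update_self, Matrix.smul_apply, smul_eq_mul]
        field_simp
      | (i + 2) =>
        apply entry_bound M 1 _ _ h1M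
        simp only [hA'', Function.update_of_ne (by omega : i + 2 ≠ 1),
          Function.update_of_ne (by omega : i + 2 ≠ 0), one_mul]
    · rw [Finset.mul_sum]
      apply Finset.sum_le_sum
      intro j _
      match i with
      | 0 =>
        apply entry_bound M c⁻¹ _ _ hciM
        simp only [hb'', Function.update_self, Pi.smul_apply, smul_eq_mul]
        field_simp
      | (i + 1) =>
        apply entry_bound M 1 _ _ h1M
        simp only [hb'', Function.update_of_ne (by omega : i + 1 ≠ 0), one_mul]
  calc paramDist n (m + 1) A A'' b b''
      ≤ M * paramDist n (m + 1) (Function.update (Function.update A 0 (c • A 0)) 1 (c⁻¹ • A 1))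
        A' (Function.update b 0 (c • b 0)) b' := hdist
    _ < M * (δ / M) := by exact mul_lt_mul_of_pos_left hlt hM0
    _ = δ := by field_simp
end

section
/- Let F_φ be an L-layer ReLU MLP with L ≥ 2, layer widths n_0 = m, n_1, …, n_L = n, training inputs x_1, …, x_N ∈ ℝ^m, and continuous ℓ : (ℝ^n)^N → ℝ, with L_MLP(φ) = ℓ(F_φ(x_1), …, F_φ(x_N)). Suppose parameters φ' = (A_1, b_1, …, A_L, b_L) satisfy: (i) every component of A_1 x_i + b_1 is strictly negative for every i (all first-layer ReLUs are dead on the training set), and (ii) the tail parameter ψ' = (A_2, b_2, …, A_L, b_L) is a local minimum of the map ψ ↦ ℓ(T_ψ(0), …, T_ψ(0)), where T_ψ is the (L−1)-layer ReLU MLP with parameters ψ evaluated at the zero vector 0 ∈ ℝ^{n_1}. Then φ' is a local minimum of L_MLP. -/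
open Matrix

lemma act_zero_shift (n : ℕ → ℕ)
    (A : ∀ i : ℕ, Matrix (Fin (n (i + 1))) (Fin (n i)) ℝ)
    (b : ∀ i : ℕ, Fin (n (i + 1)) → ℝ)
    (x : Fin (n 0) → ℝ)
    (h : ∀ j, (A 0).mulVec x j + b 0 j ≤ 0) (k : ℕ) :
    act n A b x (k + 1) =
      act (fun i => n (i + 1)) (fun i => A (i + 1)) (fun i => b (i + 1)) 0 k := by
  induction k with
  | zero =>
      funext j
      show max ((A 0).mulVec x j + b 0 j) 0 = (0 : Fin (n 1) → ℝ) j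
      simp [max_eq_right (h j)]
  | succ k ih =>
      funext j
      show max ((A (k + 1)).mulVec (act n A b x (k + 1)) j + b (k + 1) j) 0 = _
      rw [ih]
      rfl

lemma mlp_shift (n : ℕ → ℕ) (K' : ℕ)
    (A : ∀ i : ℕ, Matrix (Fin (n (i + 1))) (Fin (n i)) ℝ)
    (b : ∀ i : ℕ, Fin (n (i + 1)) → ℝ)
    (x : Fin (n 0) → ℝ)
    (h : ∀ j, (A 0).mulVec x j + b 0 j ≤ 0) :
    mlp n A b (K' + 1) x =
      mlp (fun i => n (i + 1)) (fun i => A (i + 1)) (fun i => b (i + 1)) K' 0 := by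
  show preact n A b x (K' + 1) = _
  funext j
  simp only [preact, mlp, act_zero_shift n A b x h K']

lemma paramDist_nonneg (n : ℕ → ℕ) (K : ℕ) (A A') (b b') :
    0 ≤ paramDist n K A A' b b' := Real.sqrt_nonneg _

lemma term_le_sq (n : ℕ → ℕ) (K : ℕ) (A A') (b b') (i : ℕ) (hi : i < K + 1) :
    ((∑ j, ∑ k, (A i j k - A' i j k) ^ 2) + ∑ j, (b i j - b' i j) ^ 2)
      ≤ (paramDist n K A A' b b') ^ 2 := by
  rw [paramDist, Real.sq_sqrt (by positivity)]
  exact Finset.single_le_sum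
    (f := fun i => (∑ j, ∑ k, (A i j k - A' i j k) ^ 2) + ∑ j, (b i j - b' i j) ^ 2)
    (fun _ _ => by positivity) (Finset.mem_range.mpr hi)

lemma abs_A_le (n : ℕ → ℕ) (K : ℕ) (A A') (b b') (i : ℕ) (hi : i < K + 1)
    (j : Fin (n (i + 1))) (k : Fin (n i)) :
    |A' i j k - A i j k| ≤ paramDist n K A A' b b' := by
  have h1 : (A i j k - A' i j k) ^ 2 ≤ (paramDist n K A A' b b') ^ 2 := by
    refine le_trans ?_ (term_le_sq n K A A' b b' i hi)
    have : (A i j k - A' i j k) ^ 2 ≤ ∑ j, ∑ k, (A i j k - A' i j k) ^ 2 := by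
      refine le_trans (Finset.single_le_sum (f := fun k => (A i j k - A' i j k) ^ 2)
        (fun _ _ => by positivity) (Finset.mem_univ k)) ?_
      exact Finset.single_le_sum (f := fun j => ∑ k, (A i j k - A' i j k) ^ 2)
        (fun _ _ => by positivity) (Finset.mem_univ j)
    have hb : (0:ℝ) ≤ ∑ j, (b i j - b' i j) ^ 2 := by positivity
    linarith
  calc |A' i j k - A i j k| = Real.sqrt ((A i j k - A' i j k) ^ 2) := by
        rw [Real.sqrt_sq_eq_abs, abs_sub_comm]
    _ ≤ Real.sqrt ((paramDist n K A A' b b') ^ 2) := Real.sqrt_le_sqrt h1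
    _ = paramDist n K A A' b b' := Real.sqrt_sq (paramDist_nonneg n K A A' b b')

lemma abs_b_le (n : ℕ → ℕ) (K : ℕ) (A A') (b b') (i : ℕ) (hi : i < K + 1)
    (j : Fin (n (i + 1))) :
    |b' i j - b i j| ≤ paramDist n K A A' b b' := by
  have h1 : (b i j - b' i j) ^ 2 ≤ (paramDist n K A A' b b') ^ 2 := by
    refine le_trans ?_ (term_le_sq n K A A' b b' i hi)
    have : (b i j - b' i j) ^ 2 ≤ ∑ j, (b i j - b' i j) ^ 2 :=
      Finset.single_le_sum (f := fun j => (b i j - b' i j) ^ 2)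
        (fun _ _ => by positivity) (Finset.mem_univ j)
    have hA : (0:ℝ) ≤ ∑ j, ∑ k, (A i j k - A' i j k) ^ 2 := by positivity
    linarith
  calc |b' i j - b i j| = Real.sqrt ((b i j - b' i j) ^ 2) := by
        rw [Real.sqrt_sq_eq_abs, abs_sub_comm]
    _ ≤ Real.sqrt ((paramDist n K A A' b b') ^ 2) := Real.sqrt_le_sqrt h1
    _ = paramDist n K A A' b b' := Real.sqrt_sq (paramDist_nonneg n K A A' b b')

lemma tail_paramDist_le (n : ℕ → ℕ) (K : ℕ)
    (A A' : ∀ i : ℕ, Matrix (Fin (n (i + 1))) (Fin (n i)) ℝ)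
    (b b' : ∀ i : ℕ, Fin (n (i + 1)) → ℝ) :
    paramDist (fun i => n (i + 1)) K (fun i => A (i + 1)) (fun i => A' (i + 1))
        (fun i => b (i + 1)) (fun i => b' (i + 1))
      ≤ paramDist n (K + 1) A A' b b' := by
  apply Real.sqrt_le_sqrt
  rw [Finset.sum_range_succ' _ (K+1)]
  have h0 : (0:ℝ) ≤ (∑ j, ∑ k, (A 0 j k - A' 0 j k) ^ 2) + ∑ j, (b 0 j - b' 0 j) ^ 2 := by
    positivity
  exact le_add_of_nonneg_right h0

/-- Dead first layer gives local minima: for an `L = K' + 2`-layer MLP,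
if (i) all first-layer preactivations `A_1 x_i + b_1` are strictly negative on the training
inputs (all first-layer ReLUs are dead), and (ii) the tail parameters
`(A_2, b_2, …, A_L, b_L)` form a local minimum of `ψ ↦ ℓ(T_ψ(0), …, T_ψ(0))` where `T_ψ`
is the `(L-1)`-layer MLP with parameters `ψ` evaluated at `0 ∈ ℝ^{n 1}`, then the whole
parameter vector is a local minimum of the MLP training objective. -/
theorem dead_relu_local_min (n : ℕ → ℕ) (K' N : ℕ)
    (x : Fin N → Fin (n 0) → ℝ)
    (ℓ : (Fin N → Fin (n (K' + 2)) → ℝ) → ℝ)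
    (A : ∀ i : ℕ, Matrix (Fin (n (i + 1))) (Fin (n i)) ℝ)
    (b : ∀ i : ℕ, Fin (n (i + 1)) → ℝ)
    (hdead : ∀ i : Fin N, ∀ j, (A 0).mulVec (x i) j + b 0 j < 0)
    (htail : ∃ δ > 0,
      ∀ (B : ∀ i : ℕ, Matrix (Fin (n (i + 2))) (Fin (n (i + 1))) ℝ)
        (c : ∀ i : ℕ, Fin (n (i + 2)) → ℝ),
        paramDist (fun i => n (i + 1)) K' (fun i => A (i + 1)) B (fun i => b (i + 1)) c < δ →
        ℓ (fun _ => mlp (fun i => n (i + 1)) (fun i => A (i + 1)) (fun i => b (i + 1)) K' 0) ≤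
          ℓ (fun _ => mlp (fun i => n (i + 1)) B c K' 0)) :
    ∃ δ > 0, ∀ (A' : ∀ i : ℕ, Matrix (Fin (n (i + 1))) (Fin (n i)) ℝ)
      (b' : ∀ i : ℕ, Fin (n (i + 1)) → ℝ),
      paramDist n (K' + 1) A A' b b' < δ →
      ℓ (fun i => mlp n A b (K' + 1) (x i)) ≤ ℓ (fun i => mlp n A' b' (K' + 1) (x i)) := by
  obtain ⟨δ₁, hδ₁, htail⟩ := htail
  -- rewriting with dead first layer
  have key : ∀ (A' : ∀ i : ℕ, Matrix (Fin (n (i + 1))) (Fin (n i)) ℝ)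
      (b' : ∀ i : ℕ, Fin (n (i + 1)) → ℝ),
      (∀ i : Fin N, ∀ j, (A' 0).mulVec (x i) j + b' 0 j ≤ 0) →
      (fun i => mlp n A' b' (K' + 1) (x i)) =
        (fun _ : Fin N => mlp (fun i => n (i + 1)) (fun i => A' (i + 1))
          (fun i => b' (i + 1)) K' 0) := by
    intro A' b' h
    funext i
    exact mlp_shift n K' A' b' (x i) (h i)
  have hbase := key A b (fun i j => (hdead i j).le)
  by_cases hN : Nonempty (Fin N)
  swap
  · refine ⟨δ₁, hδ₁, fun A' b' _ => le_of_eq ?_⟩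
    congr 1
    funext i
    exact absurd ⟨i⟩ hN
  by_cases hn1 : Nonempty (Fin (n 1))
  swap
  · refine ⟨δ₁, hδ₁, fun A' b' hd => ?_⟩
    rw [hbase, key A' b' (fun i j => absurd ⟨j⟩ hn1)]
    exact htail _ _ (lt_of_le_of_lt (tail_paramDist_le n K' A A' b b') hd)
  -- main case
  haveI := hN; haveI := hn1
  set f : Fin N × Fin (n 1) → ℝ :=
    fun p => -((A 0).mulVec (x p.1) p.2 + b 0 p.2) / ((∑ k, |x p.1 k|) + 1) with hf
  have hune : (Finset.univ : Finset (Fin N × Fin (n 1))).Nonempty := Finset.univ_nonempty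
  set d0 : ℝ := Finset.univ.inf' hune f with hd0def
  have hd0 : 0 < d0 := by
    rw [hd0def, Finset.lt_inf'_iff]
    intro p _
    have h1 : (0:ℝ) < -((A 0).mulVec (x p.1) p.2 + b 0 p.2) := by
      linarith [hdead p.1 p.2]
    have h2 : (0:ℝ) < (∑ k, |x p.1 k|) + 1 := by positivity
    exact div_pos h1 h2
  refine ⟨min δ₁ d0, lt_min hδ₁ hd0, fun A' b' hd => ?_⟩
  set d := paramDist n (K' + 1) A A' b b' with hdd
  have hdnn : 0 ≤ d := paramDist_nonneg n (K' + 1) A A' b b'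
  have hdead' : ∀ i : Fin N, ∀ j, (A' 0).mulVec (x i) j + b' 0 j ≤ 0 := by
    intro i j
    have hS : (0:ℝ) < (∑ k, |x i k|) + 1 := by positivity
    have hdf : d < f (i, j) :=
      lt_of_lt_of_le (lt_of_lt_of_le hd (min_le_right _ _))
        (Finset.inf'_le f (Finset.mem_univ (i, j)))
    have hdf' : d < -((A 0).mulVec (x i) j + b 0 j) / ((∑ k, |x i k|) + 1) := hdf
    have hmul : d * ((∑ k, |x i k|) + 1) < -((A 0).mulVec (x i) j + b 0 j) :=
      (lt_div_iff₀ hS).mp hdf'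
    have hexp : (A' 0).mulVec (x i) j + b' 0 j =
        ((A 0).mulVec (x i) j + b 0 j) +
          ((∑ k, (A' 0 j k - A 0 j k) * x i k) + (b' 0 j - b 0 j)) := by
      have hsplit : (∑ k, (A' 0 j k - A 0 j k) * x i k) =
          (∑ k, A' 0 j k * x i k) - ∑ k, A 0 j k * x i k := by
        rw [← Finset.sum_sub_distrib]
        exact Finset.sum_congr rfl fun k _ => sub_mul _ _ _
      simp only [Matrix.mulVec, dotProduct, hsplit]
      ring
    have hsum : (∑ k, (A' 0 j k - A 0 j k) * x i k) ≤ d * ∑ k, |x i k| := by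
      rw [Finset.mul_sum]
      refine Finset.sum_le_sum fun k _ => ?_
      calc (A' 0 j k - A 0 j k) * x i k ≤ |(A' 0 j k - A 0 j k) * x i k| := le_abs_self _
        _ = |A' 0 j k - A 0 j k| * |x i k| := abs_mul _ _
        _ ≤ d * |x i k| := mul_le_mul_of_nonneg_right
              (abs_A_le n (K' + 1) A A' b b' 0 (Nat.succ_pos _) j k) (abs_nonneg _)
    have hbb : b' 0 j - b 0 j ≤ d :=
      le_trans (le_abs_self _) (abs_b_le n (K' + 1) A A' b b' 0 (Nat.succ_pos _) j)
    have hring : d * ((∑ k, |x i k|) + 1) = d * (∑ k, |x i k|) + d := by ring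
    linarith
  rw [hbase, key A' b' hdead']
  exact htail _ _ (lt_of_le_of_lt (tail_paramDist_le n K' A A' b b')
    (lt_of_lt_of_le hd (min_le_left _ _)))
end
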